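/- arXiv:2303.07941 — 3 statements merged into one kernel-verified Lean document; each statement's English description precedes it below -/
import Mathlib

section
/- Let (Ω,F,ℙ) be a probability space and Z a strictly positive random variable with E[Z] = 1. Let N ≥ 2 agents have utility functions U_i satisfying the standard conditions, competition weights λ_i ∈ [0,1], and initial wealths x_0^i > 0. Let (X^{1,*},…,X^{N,*}) be an admissible strategy profile such that for every i ∈ {1,…,N}: E[Z·X^{i,*}] = x_0^i and there exists a constant C^i > 0 with U_i'(X^{i,*}/(X̄^{i,*})^{λ_i}) = C^i·Z·(X̄^{i,*})^{λ_i} ℙ-almost surely and E[Ũ_i(C^i·Z·(X̄^{i,*})^{λ_i})] < ∞. Then (X^{1,*},…,X^{N,*}) is a Nash equilibrium. -/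
open MeasureTheory

/-- Generalized expectation `E[W] = E[W⁺] − E[W⁻]` valued in `EReal`, with the
convention that it equals `⊥` when both parts are infinite. -/
noncomputable def eExp {Ω : Type*} [MeasurableSpace Ω] (P : Measure Ω) (W : Ω → ℝ) : EReal :=
  (∫⁻ ω, ENNReal.ofReal (W ω) ∂P).toEReal - (∫⁻ ω, ENNReal.ofReal (-(W ω)) ∂P).toEReal

/-- The conjugate function `Ũ(y) = sup_{x>0} [U(x) − x·y]`. -/
noncomputable def conj (U : ℝ → ℝ) (y : ℝ) : ℝ := sSup ((fun x => U x - x * y) '' Set.Ioi 0)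

/-- The class `C(x)` of (strictly positive) claims affordable from initial wealth `x`:
`g ≥ 0` measurable with `E[Z·g] ≤ x`. -/
def inC {Ω : Type*} [MeasurableSpace Ω] (P : Measure Ω) (Z : Ω → ℝ) (x : ℝ) (g : Ω → ℝ) : Prop :=
  Measurable g ∧ (∀ ω, 0 < g ω) ∧
    ∫⁻ ω, ENNReal.ofReal (Z ω * g ω) ∂P ≤ ENNReal.ofReal x

/-- Geometric average of the other players' terminal wealth:
`X̄^i = (∏_{j≠i} X^j)^{1/(N−1)}`. -/
noncomputable def xbar {Ω : Type*} {N : ℕ} (X : Fin N → Ω → ℝ) (i : Fin N) (ω : Ω) : ℝ :=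
  (∏ j ∈ Finset.univ.erase i, X j ω) ^ (((N : ℝ) - 1)⁻¹)

/-- Nash equilibrium for the `N`-player game of utility maximization under
multiplicative relative performance criteria: each `X i` is admissible and maximizes
`g ↦ E[U_i(g/(X̄^i)^{λ_i})]` over `C(x_0^i)` with finite optimal expected utility. -/
def IsNash {Ω : Type*} [MeasurableSpace Ω] (P : Measure Ω) (Z : Ω → ℝ) {N : ℕ}
    (U : Fin N → ℝ → ℝ) (lam : Fin N → ℝ) (x0 : Fin N → ℝ) (X : Fin N → Ω → ℝ) : Prop :=
  (∀ i, inC P Z (x0 i) (X i)) ∧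
  ∀ i,
    eExp P (fun ω => U i (X i ω / (xbar X i ω) ^ (lam i))) < ⊤ ∧
    ∀ g : Ω → ℝ, inC P Z (x0 i) g →
      eExp P (fun ω => U i (g ω / (xbar X i ω) ^ (lam i))) ≤
        eExp P (fun ω => U i (X i ω / (xbar X i ω) ^ (lam i)))

namespace Stmt13Aux

open scoped ENNReal NNReal

variable {Ω : Type*} [MeasurableSpace Ω] {P : Measure Ω}

lemma enn_coe {a : ℝ≥0∞} (ha : a ≠ ⊤) : (a : EReal) = ((a.toReal : ℝ) : EReal) := by
  have h1 : (a : EReal) ≠ ⊤ := by simpa [EReal.coe_ennreal_eq_top_iff]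
  have h2 : (a : EReal) ≠ ⊥ := by
    intro h
    have := EReal.coe_ennreal_nonneg a
    rw [h] at this
    simp at this
  rw [← EReal.coe_toReal h1 h2, EReal.toReal_coe_ennreal]

lemma eExp_congr {W₁ W₂ : Ω → ℝ} (h : W₁ =ᵐ[P] W₂) : eExp P W₁ = eExp P W₂ := by
  have h1 : (fun ω => ENNReal.ofReal (W₁ ω)) =ᵐ[P] fun ω => ENNReal.ofReal (W₂ ω) :=
    h.mono fun ω hω => by simp only [hω]
  have h2 : (fun ω => ENNReal.ofReal (-(W₁ ω))) =ᵐ[P] fun ω => ENNReal.ofReal (-(W₂ ω)) :=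
    h.mono fun ω hω => by simp only [hω]
  unfold eExp
  rw [lintegral_congr_ae h1, lintegral_congr_ae h2]

lemma eExp_mono {W₁ W₂ : Ω → ℝ} (h : ∀ᵐ ω ∂P, W₁ ω ≤ W₂ ω) : eExp P W₁ ≤ eExp P W₂ := by
  refine EReal.sub_le_sub ?_ ?_
  · exact EReal.coe_ennreal_le_coe_ennreal_iff.2
      (lintegral_mono_ae (h.mono fun ω hω => ENNReal.ofReal_le_ofReal hω))
  · exact EReal.coe_ennreal_le_coe_ennreal_iff.2
      (lintegral_mono_ae (h.mono fun ω hω => ENNReal.ofReal_le_ofReal (neg_le_neg hω)))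

lemma pp_ne_top {q : Ω → ℝ} (hq : Integrable q P) :
    ∫⁻ ω, ENNReal.ofReal (q ω) ∂P ≠ ⊤ := by
  refine ne_top_of_le_ne_top hq.2.ne (lintegral_mono fun ω => ?_)
  exact Real.ofReal_le_enorm _

lemma pn_ne_top {q : Ω → ℝ} (hq : Integrable q P) :
    ∫⁻ ω, ENNReal.ofReal (-q ω) ∂P ≠ ⊤ := by
  have := pp_ne_top (P := P) (q := fun ω => -q ω) hq.neg
  simpa using this

lemma eExp_integrable {W : Ω → ℝ} (hW : Integrable W P) :
    eExp P W = ((∫ ω, W ω ∂P : ℝ) : EReal) := by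
  rw [integral_eq_lintegral_pos_part_sub_lintegral_neg_part hW]
  show ((∫⁻ ω, ENNReal.ofReal (W ω) ∂P : ℝ≥0∞) : EReal)
      - ((∫⁻ ω, ENNReal.ofReal (-(W ω)) ∂P : ℝ≥0∞) : EReal) = _
  rw [enn_coe (pp_ne_top hW), enn_coe (pn_ne_top hW), ← EReal.coe_sub]

lemma pp_add_le {f g : Ω → ℝ} (hg : AEMeasurable g P) :
    ∫⁻ ω, ENNReal.ofReal (f ω + g ω) ∂P ≤
      (∫⁻ ω, ENNReal.ofReal (f ω) ∂P) + ∫⁻ ω, ENNReal.ofReal (g ω) ∂P := by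
  calc ∫⁻ ω, ENNReal.ofReal (f ω + g ω) ∂P
      ≤ ∫⁻ ω, (ENNReal.ofReal (f ω) + ENNReal.ofReal (g ω)) ∂P :=
        lintegral_mono fun ω => ENNReal.ofReal_add_le
    _ = _ := lintegral_add_right' _ (ENNReal.measurable_ofReal.comp_aemeasurable hg)

lemma pp_le {f g : Ω → ℝ} (hg : AEMeasurable g P) :
    ∫⁻ ω, ENNReal.ofReal (f ω) ∂P ≤
      (∫⁻ ω, ENNReal.ofReal (f ω + g ω) ∂P) + ∫⁻ ω, ENNReal.ofReal (-g ω) ∂P := by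
  calc ∫⁻ ω, ENNReal.ofReal (f ω) ∂P
      = ∫⁻ ω, ENNReal.ofReal ((f ω + g ω) + -g ω) ∂P := by
        apply lintegral_congr fun ω => ?_
        ring_nf
    _ ≤ (∫⁻ ω, ENNReal.ofReal (f ω + g ω) ∂P) + ∫⁻ ω, ENNReal.ofReal (-g ω) ∂P :=
        pp_add_le hg.neg

lemma pp_top {f g : Ω → ℝ} (hg : AEMeasurable g P)
    (hgn : ∫⁻ ω, ENNReal.ofReal (-g ω) ∂P ≠ ⊤)
    (hf : ∫⁻ ω, ENNReal.ofReal (f ω) ∂P = ⊤) :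
    ∫⁻ ω, ENNReal.ofReal (f ω + g ω) ∂P = ⊤ := by
  by_contra h
  have h2 := pp_le (f := f) (g := g) hg
  rw [hf, top_le_iff] at h2
  exact (ENNReal.add_ne_top.2 ⟨h, hgn⟩) h2

lemma eExp_add_int {V q : Ω → ℝ} (hV : Measurable V) (hq : Integrable q P) :
    eExp P (fun ω => V ω + q ω) = eExp P V + ((∫ ω, q ω ∂P : ℝ) : EReal) := by
  have hqm : AEMeasurable q P := hq.aemeasurable
  have hpq : ∫⁻ ω, ENNReal.ofReal (q ω) ∂P ≠ ⊤ := pp_ne_top hq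
  have hnq : ∫⁻ ω, ENNReal.ofReal (-q ω) ∂P ≠ ⊤ := pn_ne_top hq
  have negW : ∀ ω, -(V ω + q ω) = -V ω + -q ω := fun ω => by ring
  have negq : ∀ ω, - -q ω = q ω := fun ω => by ring
  rcases eq_top_or_lt_top (∫⁻ ω, ENNReal.ofReal (V ω) ∂P) with hPV | hPV
  · have hpW : ∫⁻ ω, ENNReal.ofReal (V ω + q ω) ∂P = ⊤ := pp_top hqm hnq hPV
    rcases eq_top_or_lt_top (∫⁻ ω, ENNReal.ofReal (-(V ω)) ∂P) with hNV | hNV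
    · have hnW : ∫⁻ ω, ENNReal.ofReal (-(V ω + q ω)) ∂P = ⊤ := by
        have := pp_top (f := fun ω => -V ω) (g := fun ω => -q ω) hqm.neg
          (by simpa only [negq] using hpq) hNV
        simpa only [← negW] using this
      unfold eExp
      rw [hpW, hnW, hPV, hNV]
      simp
    · have hnW : ∫⁻ ω, ENNReal.ofReal (-(V ω + q ω)) ∂P ≠ ⊤ := by
        have h2 := pp_add_le (f := fun ω => -V ω) (g := fun ω => -q ω) hqm.neg
        have h3 : ∫⁻ ω, ENNReal.ofReal (-(V ω + q ω)) ∂P ≤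
            (∫⁻ ω, ENNReal.ofReal (-(V ω)) ∂P) + ∫⁻ ω, ENNReal.ofReal (-q ω) ∂P := by
          simpa only [negW] using h2
        exact ne_top_of_le_ne_top (ENNReal.add_ne_top.2 ⟨hNV.ne, hnq⟩) h3
      unfold eExp
      rw [hpW, hPV, enn_coe hnW, enn_coe hNV.ne]
      simp
  · rcases eq_top_or_lt_top (∫⁻ ω, ENNReal.ofReal (-(V ω)) ∂P) with hNV | hNV
    · have hnW : ∫⁻ ω, ENNReal.ofReal (-(V ω + q ω)) ∂P = ⊤ := by
        have := pp_top (f := fun ω => -V ω) (g := fun ω => -q ω) hqm.neg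
          (by simpa only [negq] using hpq) hNV
        simpa only [← negW] using this
      have hpW : ∫⁻ ω, ENNReal.ofReal (V ω + q ω) ∂P ≠ ⊤ :=
        ne_top_of_le_ne_top (ENNReal.add_ne_top.2 ⟨hPV.ne, hpq⟩) (pp_add_le hqm)
      unfold eExp
      rw [hnW, hNV, enn_coe hpW, enn_coe hPV.ne]
      simp
    · have hVi : Integrable V P := by
        refine ⟨hV.aestronglyMeasurable, ?_⟩
        have key : ∀ ω, (‖V ω‖₊ : ℝ≥0∞) = ENNReal.ofReal (V ω) + ENNReal.ofReal (-(V ω)) := by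
          intro ω
          rcases le_total 0 (V ω) with h | h
          · rw [ENNReal.ofReal_of_nonpos (neg_nonpos.2 h), add_zero, ← enorm_eq_nnnorm, Real.enorm_eq_ofReal h]
          · rw [ENNReal.ofReal_of_nonpos h, zero_add, ← nnnorm_neg,
              ← enorm_eq_nnnorm, Real.enorm_eq_ofReal (neg_nonneg.2 h)]
        show (∫⁻ ω, (‖V ω‖₊ : ℝ≥0∞) ∂P) < ⊤
        calc (∫⁻ ω, (‖V ω‖₊ : ℝ≥0∞) ∂P)
            = ∫⁻ ω, (ENNReal.ofReal (V ω) + ENNReal.ofReal (-(V ω))) ∂P :=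
              lintegral_congr key
          _ = (∫⁻ ω, ENNReal.ofReal (V ω) ∂P) + ∫⁻ ω, ENNReal.ofReal (-(V ω)) ∂P :=
              lintegral_add_left hV.ennreal_ofReal _
          _ < ⊤ := ENNReal.add_lt_top.2 ⟨hPV, hNV⟩
      have hWi : Integrable (fun ω => V ω + q ω) P := hVi.add hq
      rw [eExp_integrable hWi, eExp_integrable hVi, ← EReal.coe_add, integral_add hVi hq]

lemma conj_isGreatest {U : ℝ → ℝ} (hconc : StrictConcaveOn ℝ (Set.Ioi 0) U)
    (hsmooth : ContDiffOn ℝ 1 U (Set.Ioi 0)) {x : ℝ} (hx : 0 < x) :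
    IsGreatest ((fun t => U t - t * deriv U x) '' Set.Ioi 0) (U x - x * deriv U x) := by
  constructor
  · exact ⟨x, hx, rfl⟩
  · rintro _ ⟨t, ht, rfl⟩
    have ht' : (0 : ℝ) < t := ht
    have hdiff : DifferentiableAt ℝ U x :=
      (hsmooth.differentiableOn one_ne_zero).differentiableAt (isOpen_Ioi.mem_nhds hx)
    have hg : ConvexOn ℝ (Set.Ioi 0) (-U) := hconc.concaveOn.neg
    have hgd : DifferentiableAt ℝ (-U) x := hdiff.neg
    have hderiv_neg : deriv (-U) x = -deriv U x := deriv.neg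
    show U t - t * deriv U x ≤ U x - x * deriv U x
    rcases lt_trichotomy t x with h | h | h
    · have hs := hg.slope_le_deriv (Set.mem_Ioi.2 ht') (Set.mem_Ioi.2 hx) h hgd
      rw [slope_def_field, hderiv_neg] at hs
      have hxt : (0:ℝ) < x - t := sub_pos.2 h
      rw [div_le_iff₀ hxt] at hs
      simp only [Pi.neg_apply] at hs
      nlinarith [hs]
    · rw [h]
    · have hs := hg.deriv_le_slope (Set.mem_Ioi.2 hx) (Set.mem_Ioi.2 ht') h hgd
      rw [slope_def_field, hderiv_neg] at hs
      have hxt : (0:ℝ) < t - x := sub_pos.2 h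
      rw [le_div_iff₀ hxt] at hs
      simp only [Pi.neg_apply] at hs
      nlinarith [hs]

lemma conj_crit {U : ℝ → ℝ} (hconc : StrictConcaveOn ℝ (Set.Ioi 0) U)
    (hsmooth : ContDiffOn ℝ 1 U (Set.Ioi 0)) {x : ℝ} (hx : 0 < x) :
    conj U (deriv U x) = U x - x * deriv U x :=
  (conj_isGreatest hconc hsmooth hx).csSup_eq

lemma le_conj_crit {U : ℝ → ℝ} (hconc : StrictConcaveOn ℝ (Set.Ioi 0) U)
    (hsmooth : ContDiffOn ℝ 1 U (Set.Ioi 0)) {x t : ℝ} (hx : 0 < x) (ht : 0 < t) :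
    U t - t * deriv U x ≤ conj U (deriv U x) := by
  rw [conj_crit hconc hsmooth hx]
  exact (conj_isGreatest hconc hsmooth hx).2 ⟨t, ht, rfl⟩

lemma measurable_U_comp {U : ℝ → ℝ} (hmono : StrictMonoOn U (Set.Ioi 0))
    {f : Ω → ℝ} (hf : Measurable f) (hfpos : ∀ ω, 0 < f ω) :
    Measurable fun ω => U (f ω) := by
  have hG : Monotone fun t => U (Real.exp t) := fun s t hst =>
    hmono.monotoneOn (Set.mem_Ioi.2 (Real.exp_pos s)) (Set.mem_Ioi.2 (Real.exp_pos t))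
      (Real.exp_le_exp.2 hst)
  have heq : (fun ω => U (f ω)) = fun ω => U (Real.exp (Real.log (f ω))) := by
    funext ω; rw [Real.exp_log (hfpos ω)]
  rw [heq]
  exact hG.measurable.comp (Real.measurable_log.comp hf)

lemma measurable_rpow_of_pos {f : Ω → ℝ} (hf : Measurable f) (hpos : ∀ ω, 0 < f ω) (c : ℝ) :
    Measurable fun ω => f ω ^ c := by
  have heq : (fun ω => f ω ^ c) = fun ω => Real.exp (Real.log (f ω) * c) :=
    funext fun ω => Real.rpow_def_of_pos (hpos ω) c
  rw [heq]
  exact Real.measurable_exp.comp ((Real.measurable_log.comp hf).mul_const c)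

lemma int_Zg {Z : Ω → ℝ} (hZmeas : Measurable Z) (hZpos : ∀ ω, 0 < Z ω)
    {x0 : ℝ} {g : Ω → ℝ} (hg : inC P Z x0 g) :
    Integrable (fun ω => Z ω * g ω) P := by
  obtain ⟨hgm, hgpos, hgc⟩ := hg
  refine ⟨(hZmeas.mul hgm).aestronglyMeasurable, ?_⟩
  rw [hasFiniteIntegral_iff_ofReal
    (Filter.Eventually.of_forall fun ω => (mul_pos (hZpos ω) (hgpos ω)).le)]
  exact lt_of_le_of_lt hgc ENNReal.ofReal_lt_top

lemma integral_Zg_le {Z : Ω → ℝ} (hZmeas : Measurable Z) (hZpos : ∀ ω, 0 < Z ω)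
    {x0 : ℝ} (hx0 : 0 < x0) {g : Ω → ℝ} (hg : inC P Z x0 g) :
    ∫ ω, Z ω * g ω ∂P ≤ x0 := by
  rw [integral_eq_lintegral_of_nonneg_ae
    (Filter.Eventually.of_forall fun ω => (mul_pos (hZpos ω) (hg.2.1 ω)).le)
    ((hZmeas.mul hg.1).aestronglyMeasurable)]
  exact ENNReal.toReal_le_of_le_ofReal hx0.le hg.2.2

lemma integral_ZX_eq {Z : Ω → ℝ} (hZmeas : Measurable Z) (hZpos : ∀ ω, 0 < Z ω)
    {x0 : ℝ} (hx0 : 0 < x0) {Xi : Ω → ℝ} (hXm : Measurable Xi) (hXpos : ∀ ω, 0 < Xi ω)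
    (hbudget : ∫⁻ ω, ENNReal.ofReal (Z ω * Xi ω) ∂P = ENNReal.ofReal x0) :
    ∫ ω, Z ω * Xi ω ∂P = x0 := by
  rw [integral_eq_lintegral_of_nonneg_ae
    (Filter.Eventually.of_forall fun ω => (mul_pos (hZpos ω) (hXpos ω)).le)
    ((hZmeas.mul hXm).aestronglyMeasurable), hbudget, ENNReal.toReal_ofReal hx0.le]

lemma key_aux (P : Measure Ω) [IsProbabilityMeasure P]
    (Z : Ω → ℝ) (hZmeas : Measurable Z) (hZpos : ∀ ω, 0 < Z ω)
    (U : ℝ → ℝ) (hmono : StrictMonoOn U (Set.Ioi 0))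
    (hconc : StrictConcaveOn ℝ (Set.Ioi 0) U) (hsmooth : ContDiffOn ℝ 1 U (Set.Ioi 0))
    (x0 : ℝ) (hx0 : 0 < x0)
    (a : Ω → ℝ) (hameas : Measurable a) (hapos : ∀ ω, 0 < a ω)
    (Xi : Ω → ℝ) (hXi : inC P Z x0 Xi)
    (hbudget : ∫⁻ ω, ENNReal.ofReal (Z ω * Xi ω) ∂P = ENNReal.ofReal x0)
    (C : ℝ) (hC : 0 < C)
    (hderiv : ∀ᵐ ω ∂P, deriv U (Xi ω / a ω) = C * Z ω * a ω)
    (hfin : eExp P (fun ω => conj U (C * Z ω * a ω)) < ⊤) :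
    eExp P (fun ω => U (Xi ω / a ω)) < ⊤ ∧
      ∀ g : Ω → ℝ, inC P Z x0 g →
        eExp P (fun ω => U (g ω / a ω)) ≤ eExp P (fun ω => U (Xi ω / a ω)) := by
  obtain ⟨hXm, hXpos, hXc⟩ := hXi
  have hx'pos : ∀ ω, 0 < Xi ω / a ω := fun ω => div_pos (hXpos ω) (hapos ω)
  have hWmeas : Measurable fun ω => U (Xi ω / a ω) :=
    measurable_U_comp hmono (hXm.div hameas) hx'pos
  have hVmeas : Measurable fun ω => U (Xi ω / a ω) - C * (Z ω * Xi ω) :=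
    hWmeas.sub ((hZmeas.mul hXm).const_mul C)
  have hZX_int : Integrable (fun ω => Z ω * Xi ω) P := int_Zg hZmeas hZpos ⟨hXm, hXpos, hXc⟩
  have hqX_int : Integrable (fun ω => C * (Z ω * Xi ω)) P := hZX_int.const_mul C
  -- a.e. identification of the conjugate with V
  have hconj_ae : (fun ω => conj U (C * Z ω * a ω)) =ᵐ[P]
      fun ω => U (Xi ω / a ω) - C * (Z ω * Xi ω) := by
    filter_upwards [hderiv] with ω hω
    have h1 : conj U (deriv U (Xi ω / a ω))
        = U (Xi ω / a ω) - (Xi ω / a ω) * deriv U (Xi ω / a ω) :=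
      conj_crit hconc hsmooth (hx'pos ω)
    rw [hω] at h1
    have h2 : Xi ω / a ω * (C * Z ω * a ω) = C * (Z ω * Xi ω) := by
      field_simp [(hapos ω).ne']
    rw [h1, h2]
  -- the main identity for eExp at the optimum
  have hVq : (fun ω => (U (Xi ω / a ω) - C * (Z ω * Xi ω)) + C * (Z ω * Xi ω))
      = fun ω => U (Xi ω / a ω) := by
    funext ω; ring
  have hEW : eExp P (fun ω => U (Xi ω / a ω))
      = eExp P (fun ω => U (Xi ω / a ω) - C * (Z ω * Xi ω))
        + ((∫ ω, C * (Z ω * Xi ω) ∂P : ℝ) : EReal) := by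
    rw [← hVq]
    exact eExp_add_int hVmeas hqX_int
  have hEV : eExp P (fun ω => U (Xi ω / a ω) - C * (Z ω * Xi ω)) < ⊤ := by
    rw [← eExp_congr hconj_ae]
    exact hfin
  constructor
  · rw [hEW]
    exact EReal.add_lt_top hEV.ne (EReal.coe_ne_top _)
  · intro g hg
    obtain ⟨hgm, hgpos, hgc⟩ := hg
    have hZg_int : Integrable (fun ω => Z ω * g ω) P := int_Zg hZmeas hZpos ⟨hgm, hgpos, hgc⟩
    have hqg_int : Integrable (fun ω => C * (Z ω * g ω)) P := hZg_int.const_mul C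
    have hg_le : ∀ᵐ ω ∂P, U (g ω / a ω)
        ≤ (U (Xi ω / a ω) - C * (Z ω * Xi ω)) + C * (Z ω * g ω) := by
      filter_upwards [hderiv] with ω hω
      have hub : U (g ω / a ω) - (g ω / a ω) * deriv U (Xi ω / a ω)
          ≤ conj U (deriv U (Xi ω / a ω)) :=
        le_conj_crit hconc hsmooth (hx'pos ω) (div_pos (hgpos ω) (hapos ω))
      have h1 : conj U (deriv U (Xi ω / a ω))
          = U (Xi ω / a ω) - (Xi ω / a ω) * deriv U (Xi ω / a ω) :=
        conj_crit hconc hsmooth (hx'pos ω)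
      rw [h1, hω] at hub
      have e1 : g ω / a ω * (C * Z ω * a ω) = C * (Z ω * g ω) := by
        field_simp [(hapos ω).ne']
      have e2 : Xi ω / a ω * (C * Z ω * a ω) = C * (Z ω * Xi ω) := by
        field_simp [(hapos ω).ne']
      rw [e1, e2] at hub
      linarith
    have hint_le : ∫ ω, C * (Z ω * g ω) ∂P ≤ ∫ ω, C * (Z ω * Xi ω) ∂P := by
      rw [integral_const_mul, integral_const_mul]
      have h1 : ∫ ω, Z ω * g ω ∂P ≤ x0 := integral_Zg_le hZmeas hZpos hx0 ⟨hgm, hgpos, hgc⟩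
      have h2 : ∫ ω, Z ω * Xi ω ∂P = x0 := integral_ZX_eq hZmeas hZpos hx0 hXm hXpos hbudget
      rw [h2]
      exact mul_le_mul_of_nonneg_left h1 hC.le
    calc eExp P (fun ω => U (g ω / a ω))
        ≤ eExp P (fun ω => (U (Xi ω / a ω) - C * (Z ω * Xi ω)) + C * (Z ω * g ω)) :=
          eExp_mono hg_le
      _ = eExp P (fun ω => U (Xi ω / a ω) - C * (Z ω * Xi ω))
            + ((∫ ω, C * (Z ω * g ω) ∂P : ℝ) : EReal) := eExp_add_int hVmeas hqg_int
      _ ≤ eExp P (fun ω => U (Xi ω / a ω) - C * (Z ω * Xi ω))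
            + ((∫ ω, C * (Z ω * Xi ω) ∂P : ℝ) : EReal) := by
          exact add_le_add_right (EReal.coe_le_coe_iff.2 hint_le) _
      _ = eExp P (fun ω => U (Xi ω / a ω)) := hEW.symm

end Stmt13Aux

theorem stmt13 {Ω : Type*} [MeasurableSpace Ω] (P : Measure Ω) [IsProbabilityMeasure P]
    (Z : Ω → ℝ) (hZmeas : Measurable Z) (hZpos : ∀ ω, 0 < Z ω)
    (hZint : Integrable Z P) (hZ1 : ∫ ω, Z ω ∂P = 1)
    (N : ℕ) (hN : 2 ≤ N) (U : Fin N → ℝ → ℝ) (lam : Fin N → ℝ) (x0 : Fin N → ℝ)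
    (hmono : ∀ i, StrictMonoOn (U i) (Set.Ioi 0))
    (hconc : ∀ i, StrictConcaveOn ℝ (Set.Ioi 0) (U i))
    (hsmooth : ∀ i, ContDiffOn ℝ 1 (U i) (Set.Ioi 0))
    (hinada0 : ∀ i, Filter.Tendsto (deriv (U i)) (nhdsWithin 0 (Set.Ioi 0)) Filter.atTop)
    (hinadaInf : ∀ i, Filter.Tendsto (deriv (U i)) Filter.atTop (nhds 0))
    (hlam : ∀ i, lam i ∈ Set.Icc (0:ℝ) 1) (hx0 : ∀ i, 0 < x0 i)
    (X : Fin N → Ω → ℝ) (hXadm : ∀ i, inC P Z (x0 i) (X i))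
    (hchar : ∀ i, (∫⁻ ω, ENNReal.ofReal (Z ω * X i ω) ∂P = ENNReal.ofReal (x0 i)) ∧
      ∃ C : ℝ, 0 < C ∧
        (∀ᵐ ω ∂P, deriv (U i) (X i ω / (xbar X i ω) ^ (lam i)) =
          C * Z ω * (xbar X i ω) ^ (lam i)) ∧
        eExp P (fun ω => conj (U i) (C * Z ω * (xbar X i ω) ^ (lam i))) < ⊤) :
    IsNash P Z U lam x0 X := by
  refine ⟨hXadm, fun i => ?_⟩
  obtain ⟨hbudget, C, hC, hderiv, hfin⟩ := hchar i
  have hprodmeas : Measurable fun ω => ∏ j ∈ Finset.univ.erase i, X j ω :=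
    Finset.measurable_prod _ fun j _ => (hXadm j).1
  have hprodpos : ∀ ω, 0 < ∏ j ∈ Finset.univ.erase i, X j ω :=
    fun ω => Finset.prod_pos fun j _ => (hXadm j).2.1 ω
  have hxbarmeas : Measurable fun ω => xbar X i ω :=
    Stmt13Aux.measurable_rpow_of_pos hprodmeas hprodpos _
  have hxbarpos : ∀ ω, 0 < xbar X i ω :=
    fun ω => Real.rpow_pos_of_pos (hprodpos ω) _
  have hameas : Measurable fun ω => (xbar X i ω) ^ (lam i) :=
    Stmt13Aux.measurable_rpow_of_pos hxbarmeas hxbarpos _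
  have hapos : ∀ ω, 0 < (xbar X i ω) ^ (lam i) :=
    fun ω => Real.rpow_pos_of_pos (hxbarpos ω) _
  exact Stmt13Aux.key_aux P Z hZmeas hZpos (U i) (hmono i) (hconc i) (hsmooth i)
    (x0 i) (hx0 i) (fun ω => (xbar X i ω) ^ (lam i)) hameas hapos (X i) (hXadm i)
    hbudget C hC hderiv hfin
end

section
/- Under Assumption (A) on the utilities and Assumption (Z) on the density, for every D = (D^1,…,D^N) ∈ ℝ^N, setting (X^{1,*},…,X^{N,*}) = H(D) = exp(G^{-1}(D + ln Z·𝟙)) and X̄^{i,*} = (∏_{j≠i} X^{j,*})^{1/(N−1)}, one has E[Ũ_i(exp(D^i)·Z·(X̄^{i,*})^{λ_i})] < ∞ for every i ∈ {1,…,N}. -/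
open MeasureTheory

/-- Relative risk aversion `RRA[U](x) = -x·U''(x)/U'(x)`. -/
noncomputable def RRA (U : ℝ → ℝ) (x : ℝ) : ℝ := -x * deriv (deriv U) x / deriv U x

/-- `V(y) = ln U'(e^y)`. -/
noncomputable def Vfun (U : ℝ → ℝ) (y : ℝ) : ℝ := Real.log (deriv U (Real.exp y))

/-- The map `G : ℝ^N → ℝ^N`, `G^i(y) = V_i(y^i − μ_i·Σ_{j≠i} y^j) − μ_i·Σ_{j≠i} y^j`. -/
noncomputable def Gmap {N : ℕ} (U : Fin N → ℝ → ℝ) (μ : Fin N → ℝ)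
    (y : Fin N → ℝ) : Fin N → ℝ :=
  fun i => Vfun (U i) (y i - μ i * ∑ j ∈ Finset.univ.erase i, y j)
    - μ i * ∑ j ∈ Finset.univ.erase i, y j

/-- `H(D)(ω) = exp(G^{-1}(D + ln Z(ω)·𝟙))`, componentwise. -/
noncomputable def Hmap {Ω : Type*} {N : ℕ} (U : Fin N → ℝ → ℝ) (μ : Fin N → ℝ)
    (Z : Ω → ℝ) (D : Fin N → ℝ) (ω : Ω) : Fin N → ℝ :=
  fun i => Real.exp (Function.invFun (Gmap U μ) (fun j => D j + Real.log (Z ω)) i)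

/-- Assumption (A) on the utility functions. -/
structure AssumpA {N : ℕ} (U : Fin N → ℝ → ℝ) (lam μ eps : Fin N → ℝ) : Prop where
  mono : ∀ i, StrictMonoOn (U i) (Set.Ioi 0)
  concave : ∀ i, StrictConcaveOn ℝ (Set.Ioi 0) (U i)
  smooth : ∀ i, ContDiffOn ℝ 2 (U i) (Set.Ioi 0)
  inada0 : ∀ i, Filter.Tendsto (deriv (U i)) (nhdsWithin 0 (Set.Ioi 0)) Filter.atTop
  inadaInf : ∀ i, Filter.Tendsto (deriv (U i)) Filter.atTop (nhds 0)
  epsPos : ∀ i, 0 < eps i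
  rraLB : ∀ i, ∀ x > 0, eps i + μ i / (1 + μ i) ≤ RRA (U i) x
  special : ∃ i, lam i < 1 ∨ ∃ R : ℝ, 0 < R ∧ ∀ x > 0, RRA (U i) x ≤ R

section AuxLemmas
open Real Set


section PartA
variable {U : ℝ → ℝ} {δ : ℝ}

lemma contOn_derivU (hsm : ContDiffOn ℝ 2 U (Set.Ioi 0)) :
    ContDiffOn ℝ 1 (deriv U) (Set.Ioi 0) :=
  hsm.deriv_of_isOpen isOpen_Ioi (by norm_num)

lemma hasDerivAtU (hsm : ContDiffOn ℝ 2 U (Set.Ioi 0)) {x : ℝ} (hx : 0 < x) :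
    HasDerivAt U (deriv U x) x := by
  have h := (hsm.contDiffAt (Ioi_mem_nhds hx)).differentiableAt (by norm_num)
  exact h.hasDerivAt

lemma hasDerivAtU' (hsm : ContDiffOn ℝ 2 U (Set.Ioi 0)) {x : ℝ} (hx : 0 < x) :
    HasDerivAt (deriv U) (deriv (deriv U) x) x := by
  have h := ((contOn_derivU hsm).contDiffAt (Ioi_mem_nhds hx)).differentiableAt (by norm_num)
  exact h.hasDerivAt

lemma derivU_ne (hδ : 0 < δ) (hrra : ∀ x > 0, δ ≤ RRA U x) {x : ℝ} (hx : 0 < x) :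
    deriv U x ≠ 0 := by
  intro h
  have := hrra x hx
  rw [RRA, h, div_zero] at this
  linarith

lemma derivU_pos (hsm : ContDiffOn ℝ 2 U (Set.Ioi 0))
    (hin : Filter.Tendsto (deriv U) (nhdsWithin 0 (Set.Ioi 0)) Filter.atTop)
    (hδ : 0 < δ) (hrra : ∀ x > 0, δ ≤ RRA U x) {x : ℝ} (hx : 0 < x) :
    0 < deriv U x := by
  rcases lt_trichotomy (deriv U x) 0 with hneg | hzero | hpos
  · -- find x₁ ∈ (0,x) with deriv U x₁ > 0, then IVT gives a zero
    exfalso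
    have h1 : {t | (0:ℝ) < deriv U t} ∈ nhdsWithin 0 (Set.Ioi 0) :=
      hin.eventually (Filter.eventually_gt_atTop 0)
    have h2 : Set.Ioo (0:ℝ) x ∈ nhdsWithin 0 (Set.Ioi 0) := by
      rw [show Set.Ioo (0:ℝ) x = Set.Iio x ∩ Set.Ioi 0 by ext t; simp [Set.mem_Ioo, and_comm]]
      exact Filter.inter_mem (mem_nhdsWithin_of_mem_nhds (Iio_mem_nhds hx)) self_mem_nhdsWithin
    obtain ⟨x₁, hx₁pos, hx₁mem⟩ := Filter.nonempty_of_mem (Filter.inter_mem h1 h2)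
    have hx₁lt : x₁ < x := hx₁mem.2
    have hx₁gt : 0 < x₁ := hx₁mem.1
    have hcont : ContinuousOn (deriv U) (Set.Icc x₁ x) :=
      ((contOn_derivU hsm).continuousOn).mono (fun t ht => lt_of_lt_of_le hx₁gt ht.1)
    have : (0:ℝ) ∈ Set.Icc (deriv U x) (deriv U x₁) := ⟨le_of_lt hneg, le_of_lt hx₁pos⟩
    obtain ⟨c, hc, hc0⟩ := intermediate_value_Icc' (le_of_lt hx₁lt) hcont this
    exact derivU_ne hδ hrra (lt_of_lt_of_le hx₁gt hc.1) hc0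
  · exact absurd hzero (derivU_ne hδ hrra hx)
  · exact hpos

lemma derivU2_neg (hsm : ContDiffOn ℝ 2 U (Set.Ioi 0))
    (hin : Filter.Tendsto (deriv U) (nhdsWithin 0 (Set.Ioi 0)) Filter.atTop)
    (hδ : 0 < δ) (hrra : ∀ x > 0, δ ≤ RRA U x) {x : ℝ} (hx : 0 < x) :
    deriv (deriv U) x ≤ -δ * deriv U x / x := by
  have h1 := hrra x hx
  have h2 := derivU_pos hsm hin hδ hrra hx
  rw [RRA] at h1
  have h3 := (le_div_iff₀ h2).mp h1
  rw [le_div_iff₀ hx]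
  nlinarith

lemma derivU_anti (hsm : ContDiffOn ℝ 2 U (Set.Ioi 0))
    (hin : Filter.Tendsto (deriv U) (nhdsWithin 0 (Set.Ioi 0)) Filter.atTop)
    (hδ : 0 < δ) (hrra : ∀ x > 0, δ ≤ RRA U x) :
    AntitoneOn (deriv U) (Set.Ioi 0) := by
  apply antitoneOn_of_deriv_nonpos (convex_Ioi 0) (contOn_derivU hsm).continuousOn
  · intro x hx
    rw [interior_Ioi] at hx
    exact (((contOn_derivU hsm).contDiffAt (Ioi_mem_nhds hx)).differentiableAt
      (by norm_num)).differentiableWithinAt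
  · intro x hx
    rw [interior_Ioi] at hx
    have h2 := derivU_pos hsm hin hδ hrra hx
    have := derivU2_neg hsm hin hδ hrra hx
    have : -δ * deriv U x / x < 0 := by
      apply div_neg_of_neg_of_pos _ hx; nlinarith
    linarith [derivU2_neg hsm hin hδ hrra hx]

lemma tangent_bound (hsm : ContDiffOn ℝ 2 U (Set.Ioi 0))
    (hin : Filter.Tendsto (deriv U) (nhdsWithin 0 (Set.Ioi 0)) Filter.atTop)
    (hδ : 0 < δ) (hrra : ∀ x > 0, δ ≤ RRA U x) {x x₀ : ℝ} (hx : 0 < x) (hx₀ : 0 < x₀) :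
    U x ≤ U x₀ + deriv U x₀ * (x - x₀) := by
  have hanti := derivU_anti hsm hin hδ hrra
  rcases lt_trichotomy x x₀ with h | h | h
  · obtain ⟨c, hc, hceq⟩ := exists_hasDerivAt_eq_slope U (deriv U) h
      ((hsm.continuousOn).mono (fun t ht => lt_of_lt_of_le hx ht.1))
      (fun t ht => hasDerivAtU hsm (lt_trans hx ht.1))
    have hcle : deriv U x₀ ≤ deriv U c :=
      hanti (lt_trans hx hc.1) hx₀ (le_of_lt hc.2)
    have heq : U x₀ - U x = deriv U c * (x₀ - x) := by
      rw [hceq, div_mul_eq_mul_div, mul_div_assoc, div_self (by linarith), mul_one]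
    nlinarith
  · subst h; simp
  · obtain ⟨c, hc, hceq⟩ := exists_hasDerivAt_eq_slope U (deriv U) h
      ((hsm.continuousOn).mono (fun t ht => lt_of_lt_of_le hx₀ ht.1))
      (fun t ht => hasDerivAtU hsm (lt_trans hx₀ ht.1))
    have hcle : deriv U c ≤ deriv U x₀ :=
      hanti hx₀ (lt_trans hx₀ hc.1) (le_of_lt hc.1)
    have heq : U x - U x₀ = deriv U c * (x - x₀) := by
      rw [hceq, div_mul_eq_mul_div, mul_div_assoc, div_self (by linarith), mul_one]
    nlinarith

end PartA


section PartA2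
variable {U : ℝ → ℝ} {δ : ℝ}

lemma derivU_pow_bound (hsm : ContDiffOn ℝ 2 U (Set.Ioi 0))
    (hin : Filter.Tendsto (deriv U) (nhdsWithin 0 (Set.Ioi 0)) Filter.atTop)
    (hδ : 0 < δ) (hrra : ∀ x > 0, δ ≤ RRA U x) {x : ℝ} (hx : 1 ≤ x) :
    deriv U x ≤ deriv U 1 * x ^ (-δ) := by
  have hxpos : (0:ℝ) < x := lt_of_lt_of_le one_pos hx
  set g : ℝ → ℝ := fun t => Real.log (deriv U t) + δ * Real.log t with hg
  have hgd : ∀ t (ht : 0 < t), HasDerivAt g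
      (deriv (deriv U) t / deriv U t + δ * t⁻¹) t := by
    intro t ht
    have h1 : HasDerivAt (fun t => Real.log (deriv U t))
        ((deriv U t)⁻¹ * deriv (deriv U) t) t :=
      (Real.hasDerivAt_log (ne_of_gt (derivU_pos hsm hin hδ hrra ht))).comp t
        (hasDerivAtU' hsm ht)
    have h2 : HasDerivAt (fun t => δ * Real.log t) (δ * t⁻¹) t :=
      (Real.hasDerivAt_log (ne_of_gt ht)).const_mul δ
    have := h1.add h2
    exact this.congr_deriv (by ring)
  have hganti : AntitoneOn g (Set.Ioi 0) := by
    apply antitoneOn_of_deriv_nonpos (convex_Ioi 0)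
    · intro t ht
      exact ((hgd t ht).continuousAt).continuousWithinAt
    · intro t ht
      rw [interior_Ioi] at ht
      exact ((hgd t ht).differentiableAt).differentiableWithinAt
    · intro t ht
      rw [interior_Ioi] at ht
      rw [(hgd t ht).deriv]
      have hd1 := derivU_pos hsm hin hδ hrra ht
      have hd2 := derivU2_neg hsm hin hδ hrra ht
      have ht' : (0:ℝ) < t := ht
      have h5 : deriv (deriv U) t * t ≤ -δ * deriv U t := by
        have := (le_div_iff₀ ht').mp hd2
        linarith
      have heq : deriv (deriv U) t / deriv U t + δ * t⁻¹
          = (deriv (deriv U) t * t + δ * deriv U t) / (deriv U t * t) := by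
        field_simp
      rw [heq]
      apply div_nonpos_of_nonpos_of_nonneg (by linarith) (by positivity)
  have hkey : g x ≤ g 1 := hganti (by norm_num) (by exact hxpos) hx
  have hgx : g 1 = Real.log (deriv U 1) := by simp [hg]
  rw [hgx] at hkey
  have hd1x := derivU_pos hsm hin hδ hrra hxpos
  have hd11 := derivU_pos hsm hin hδ hrra one_pos
  have hlog : Real.log (deriv U x) ≤ Real.log (deriv U 1) + Real.log (x ^ (-δ)) := by
    rw [Real.log_rpow hxpos]
    simp only [hg] at hkey
    linarith
  calc deriv U x = Real.exp (Real.log (deriv U x)) := (Real.exp_log hd1x).symm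
    _ ≤ Real.exp (Real.log (deriv U 1) + Real.log (x ^ (-δ))) := Real.exp_le_exp.mpr hlog
    _ = deriv U 1 * x ^ (-δ) := by
        rw [Real.exp_add, Real.exp_log hd11, Real.exp_log (Real.rpow_pos_of_pos hxpos _)]

lemma conj_bound (hsm : ContDiffOn ℝ 2 U (Set.Ioi 0))
    (hin : Filter.Tendsto (deriv U) (nhdsWithin 0 (Set.Ioi 0)) Filter.atTop)
    (hδ : 0 < δ) (hrra : ∀ x > 0, δ ≤ RRA U x) {y : ℝ} (hy : 0 < y) :
    conj U y ≤ U 1 + deriv U 1 * (1 + (deriv U 1 / y) ^ (δ⁻¹)) := by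
  have ha : 0 < deriv U 1 := derivU_pos hsm hin hδ hrra one_pos
  set a := deriv U 1 with haa
  set t := (a / y) ^ (δ⁻¹) with ht
  have htnn : 0 ≤ t := Real.rpow_nonneg (le_of_lt (div_pos ha hy)) _
  set x₀ := max 1 t with hx₀
  have hx₀pos : (0:ℝ) < x₀ := lt_of_lt_of_le one_pos (le_max_left _ _)
  have hx₀1 : (1:ℝ) ≤ x₀ := le_max_left _ _
  -- deriv U x₀ ≤ y
  have hkey : deriv U x₀ ≤ y := by
    rcases le_or_gt t 1 with hc | hc
    · have hx₀eq : x₀ = 1 := max_eq_left hc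
      rw [hx₀eq, ← haa]
      by_contra hcon
      push_neg at hcon
      have h1 : 1 < a / y := (one_lt_div hy).mpr hcon
      have : 1 < t := by
        rw [ht]
        exact Real.one_lt_rpow_iff_of_pos (div_pos ha hy) |>.mpr
          (Or.inl ⟨h1, by positivity⟩)
      linarith
    · have hx₀eq : x₀ = t := max_eq_right (le_of_lt hc)
      have h1 : deriv U x₀ ≤ a * x₀ ^ (-δ) := derivU_pow_bound hsm hin hδ hrra hx₀1
      have h2 : x₀ ^ (-δ) = y / a := by
        rw [hx₀eq, ht, ← Real.rpow_mul (le_of_lt (div_pos ha hy))]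
        have : δ⁻¹ * (-δ) = -1 := by field_simp
        rw [this, Real.rpow_neg_one, inv_div]
      rw [h2] at h1
      calc deriv U x₀ ≤ a * (y / a) := h1
        _ = y := by field_simp
  -- every element of the sup set is ≤ U x₀
  have hub : ∀ w ∈ (fun x => U x - x * y) '' Set.Ioi 0, w ≤ U x₀ := by
    rintro w ⟨x, hx, rfl⟩
    simp only [Set.mem_Ioi] at hx
    have htang := tangent_bound hsm hin hδ hrra hx hx₀pos
    have hd0 : 0 ≤ deriv U x₀ := le_of_lt (derivU_pos hsm hin hδ hrra hx₀pos)
    have h4 : x * (deriv U x₀ - y) ≤ 0 :=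
      mul_nonpos_of_nonneg_of_nonpos (le_of_lt hx) (by linarith)
    have h5 : 0 ≤ deriv U x₀ * x₀ := mul_nonneg hd0 (le_of_lt hx₀pos)
    show U x - x * y ≤ U x₀
    nlinarith [htang, h4, h5]
  have hne : ((fun x => U x - x * y) '' Set.Ioi 0).Nonempty :=
    ⟨U 1 - 1 * y, ⟨1, Set.mem_Ioi.mpr one_pos, rfl⟩⟩
  have h1 : conj U y ≤ U x₀ := csSup_le hne hub
  have h2 : U x₀ ≤ U 1 + a * (x₀ - 1) := tangent_bound hsm hin hδ hrra hx₀pos one_pos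
  have h3 : x₀ ≤ 1 + t := by
    rw [hx₀]
    rcases le_or_gt t 1 with hc | hc
    · rw [max_eq_left hc]; linarith
    · rw [max_eq_right (le_of_lt hc)]; linarith
  nlinarith

end PartA2


section PartB
variable {W W' : ℝ → ℝ}

lemma slope_le (hW : ∀ t, HasDerivAt W (W' t) t) {c : ℝ}
    (hub : ∀ t, W' t ≤ c) {s t : ℝ} (hst : s ≤ t) : W t - W s ≤ c * (t - s) := by
  rcases eq_or_lt_of_le hst with h | h
  · subst h; simp
  · obtain ⟨u, hu, hueq⟩ := exists_hasDerivAt_eq_slope W W' h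
      (fun v _ => (hW v).continuousAt.continuousWithinAt) (fun v _ => hW v)
    have h1 : (W t - W s) / (t - s) ≤ c := hueq ▸ hub u
    have h2 : (0:ℝ) < t - s := by linarith
    calc W t - W s = (W t - W s) / (t - s) * (t - s) := by field_simp
      _ ≤ c * (t - s) := mul_le_mul_of_nonneg_right h1 (le_of_lt h2)

lemma slope_ge (hW : ∀ t, HasDerivAt W (W' t) t) {c : ℝ}
    (hlb : ∀ t, c ≤ W' t) {s t : ℝ} (hst : s ≤ t) : c * (t - s) ≤ W t - W s := by
  have := slope_le (W := fun v => -W v) (W' := fun v => -W' v)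
    (fun v => (hW v).neg) (c := -c) (fun v => neg_le_neg (hlb v)) hst
  simp at this
  linarith

lemma exists_eq_of_slope_neg (hW : ∀ t, HasDerivAt W (W' t) t) {ε : ℝ} (hε : 0 < ε)
    (hub : ∀ t, W' t ≤ -ε) (u : ℝ) : ∃ t, W t = u := by
  set s := min 0 ((W 0 - u) / ε) with hs
  set t := max 0 ((W 0 - u) / ε) with ht
  have hst : s ≤ t := le_trans (min_le_left _ _) (le_max_left _ _)
  have hWt : W t ≤ u := by
    have h1 := slope_le hW hub (le_max_left (0:ℝ) ((W 0 - u) / ε))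
    have h2 : (W 0 - u) / ε ≤ t := le_max_right _ _
    have h3 : W t ≤ W 0 - ε * t := by linarith [h1]
    have h4 : W 0 - u ≤ ε * t := by
      rw [← div_le_iff₀' hε]; linarith [h2]
    linarith
  have hWs : u ≤ W s := by
    have h1 := slope_le hW hub (min_le_left (0:ℝ) ((W 0 - u) / ε))
    have h2 : s ≤ (W 0 - u) / ε := min_le_right _ _
    have h3 : W 0 - W s ≤ -ε * (0 - s) := by linarith [h1]
    have h4 : ε * s ≤ W 0 - u := by
      rw [← le_div_iff₀' hε]; linarith [h2]
    linarith
  have hcont : ContinuousOn W (Set.Icc s t) :=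
    fun v _ => (hW v).continuousAt.continuousWithinAt
  obtain ⟨v, _, hv⟩ := intermediate_value_Icc' hst hcont ⟨hWt, hWs⟩
  exact ⟨v, hv⟩

lemma hasDerivAt_Vfun {U : ℝ → ℝ} (hsm : ContDiffOn ℝ 2 U (Set.Ioi 0))
    (hne : ∀ x > 0, deriv U x ≠ 0) (t : ℝ) :
    HasDerivAt (Vfun U) (-(RRA U (Real.exp t))) t := by
  have hx : (0:ℝ) < Real.exp t := Real.exp_pos t
  have h1 : HasDerivAt (fun y => deriv U (Real.exp y))
      (deriv (deriv U) (Real.exp t) * Real.exp t) t :=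
    (hasDerivAtU' hsm hx).comp t (Real.hasDerivAt_exp t)
  have h2 : HasDerivAt (Vfun U)
      ((deriv U (Real.exp t))⁻¹ * (deriv (deriv U) (Real.exp t) * Real.exp t)) t :=
    (Real.hasDerivAt_log (hne _ hx)).comp t h1
  convert h2 using 1
  rw [RRA]
  field_simp [hne _ hx]

end PartB

lemma exp_abs_le_rpow {x : ℝ} (hx : 0 < x) (K : ℝ) :
    Real.exp (K * |Real.log x|) ≤ x ^ K + x ^ (-K) := by
  rcases le_total 0 (Real.log x) with h | h
  · rw [abs_of_nonneg h]
    have h2 : x ^ K = Real.exp (Real.log x * K) := Real.rpow_def_of_pos hx K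
    have h3 : (0:ℝ) < x ^ (-K) := Real.rpow_pos_of_pos hx _
    rw [h2, mul_comm]
    linarith
  · rw [abs_of_nonpos h]
    have h2 : x ^ (-K) = Real.exp (Real.log x * (-K)) := Real.rpow_def_of_pos hx _
    have h3 : (0:ℝ) < x ^ K := Real.rpow_pos_of_pos hx _
    rw [h2]
    have h4 : Real.log x * (-K) = K * (-Real.log x) := by ring
    rw [h4]
    linarith

end AuxLemmas

set_option maxHeartbeats 1000000 in
theorem stmt14 {Ω : Type*} [MeasurableSpace Ω] (P : Measure Ω) [IsProbabilityMeasure P]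
    (Z : Ω → ℝ) (hZmeas : Measurable Z) (hZpos : ∀ ω, 0 < Z ω)
    (hZ1 : ∫ ω, Z ω ∂P = 1)
    (hZmom : ∀ r : ℝ, Integrable (fun ω => Z ω ^ r) P)
    (N : ℕ) (hN : 2 ≤ N) (U : Fin N → ℝ → ℝ) (lam μ eps : Fin N → ℝ)
    (hlam : ∀ i, lam i ∈ Set.Icc (0:ℝ) 1)
    (hμ : ∀ i, μ i = lam i / ((N : ℝ) - 1))
    (hA : AssumpA U lam μ eps)
    (D : Fin N → ℝ) :
    ∀ i, eExp P (fun ω => conj (U i)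
        (Real.exp (D i) * Z ω *
          (xbar (fun j ω' => Hmap U μ Z D ω' j) i ω) ^ (lam i))) < ⊤ := by
  classical
  -- ===== numerics =====
  have hN2 : (2:ℝ) ≤ (N:ℝ) := by exact_mod_cast hN
  have hNpos : (0:ℝ) < (N:ℝ) := by linarith
  have hN1 : (1:ℝ) ≤ (N:ℝ) - 1 := by linarith
  have hN1pos : (0:ℝ) < (N:ℝ) - 1 := by linarith
  have hμnn : ∀ j, 0 ≤ μ j := fun j => by
    rw [hμ j]; exact div_nonneg (hlam j).1 (le_of_lt hN1pos)
  have h1μ : ∀ j, (0:ℝ) < 1 + μ j := fun j => by linarith [hμnn j]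
  set ν : Fin N → ℝ := fun j => μ j / (1 + μ j) with hνdef
  have hνnn : ∀ j, 0 ≤ ν j := fun j => div_nonneg (hμnn j) (le_of_lt (h1μ j))
  have hν1 : ∀ j, ν j ≤ 1 := fun j => by
    simp only [hνdef]; rw [div_le_one (h1μ j)]; linarith [hμnn j]
  have hμN : ∀ j, μ j * ((N:ℝ) - 1) = lam j := fun j => by
    rw [hμ j]; field_simp
  have hνleN : ∀ j, ν j ≤ 1 / N := by
    intro j
    simp only [hνdef]
    rw [div_le_div_iff₀ (h1μ j) hNpos]
    have h1 := hμN j; have h2 := (hlam j).2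
    nlinarith
  have hνltN : ∀ j, lam j < 1 → ν j < 1 / N := by
    intro j hj
    simp only [hνdef]
    rw [div_lt_div_iff₀ (h1μ j) hNpos]
    have h1 := hμN j
    nlinarith
  -- ===== per-agent utility facts =====
  have hδpos : ∀ j, 0 < eps j + ν j := fun j => by
    have := hA.epsPos j; have := hνnn j; linarith
  have hrra : ∀ j, ∀ x > 0, eps j + ν j ≤ RRA (U j) x := by
    intro j x hx
    have := hA.rraLB j x hx
    simpa [hνdef] using this
  have hd1pos : ∀ j, ∀ x > 0, 0 < deriv (U j) x :=
    fun j x hx => derivU_pos (hA.smooth j) (hA.inada0 j) (hδpos j) (hrra j) hx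
  -- ===== the W functions =====
  set Wf : Fin N → ℝ → ℝ := fun j t => Vfun (U j) t + ν j * t with hWfdef
  set Wd : Fin N → ℝ → ℝ := fun j t => -(RRA (U j) (Real.exp t)) + ν j with hWddef
  have hWder : ∀ j t, HasDerivAt (Wf j) (Wd j t) t := by
    intro j t
    have h1 := hasDerivAt_Vfun (hA.smooth j) (fun x hx => ne_of_gt (hd1pos j x hx)) t
    have h2 : HasDerivAt (fun t : ℝ => ν j * t) (ν j) t := by
      simpa using (hasDerivAt_id t).const_mul (ν j)
    exact h1.add h2
  have hWdub : ∀ j t, Wd j t ≤ -eps j := by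
    intro j t
    have := hrra j (Real.exp t) (Real.exp_pos t)
    simp only [hWddef]
    linarith
  have hWanti : ∀ j, ∀ s t : ℝ, s ≤ t → Wf j t - Wf j s ≤ -eps j * (t - s) :=
    fun j s t hst => slope_le (hWder j) (hWdub j) hst
  have hWsurj : ∀ j u, ∃ t, Wf j t = u :=
    fun j u => exists_eq_of_slope_neg (hWder j) (hA.epsPos j) (hWdub j) u
  set Winv : Fin N → ℝ → ℝ := fun j => Function.invFun (Wf j) with hWinvdef
  have hWeq : ∀ j u, Wf j (Winv j u) = u := fun j u => Function.invFun_eq (hWsurj j u)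
  have hWinj : ∀ j, ∀ a b : ℝ, Wf j a = Wf j b → a = b := by
    intro j a b hab
    by_contra hne
    rcases lt_or_gt_of_ne hne with h | h
    · have h1 := hWanti j a b (le_of_lt h); have := hA.epsPos j; nlinarith
    · have h1 := hWanti j b a (le_of_lt h); have := hA.epsPos j; nlinarith
  have hWuniq : ∀ j, ∀ t u : ℝ, Wf j t = u → t = Winv j u :=
    fun j t u htu => hWinj j t (Winv j u) (by rw [htu, hWeq])
  have hkey : ∀ j, ∀ u v : ℝ, Winv j u ≤ Winv j v →
      eps j * (Winv j v - Winv j u) ≤ u - v := by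
    intro j u v h
    have h1 := hWanti j (Winv j u) (Winv j v) h
    rw [hWeq, hWeq] at h1
    linarith
  have hWinvAnti : ∀ j, ∀ u v : ℝ, u ≤ v → Winv j v ≤ Winv j u := by
    intro j u v huv
    by_contra hcon
    push_neg at hcon
    have h1 := hkey j u v (le_of_lt hcon)
    have := hA.epsPos j
    nlinarith
  have hWinvLip : ∀ j, ∀ u v : ℝ, |Winv j u - Winv j v| ≤ (eps j)⁻¹ * |u - v| := by
    intro j u v
    have hepos := hA.epsPos j
    rcases le_total (Winv j u) (Winv j v) with h | h
    · have h1 := hkey j u v h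
      have h2 : 0 ≤ u - v := by nlinarith [mul_nonneg (le_of_lt hepos) (sub_nonneg.mpr h)]
      rw [abs_sub_comm, abs_of_nonneg (sub_nonneg.mpr h), abs_of_nonneg h2]
      rw [← le_div_iff₀' hepos] at h1
      rw [div_eq_inv_mul] at h1
      exact h1
    · have h1 := hkey j v u h
      have h2 : 0 ≤ v - u := by nlinarith [mul_nonneg (le_of_lt hepos) (sub_nonneg.mpr h)]
      rw [abs_of_nonneg (sub_nonneg.mpr h), abs_sub_comm, abs_of_nonneg h2]
      rw [← le_div_iff₀' hepos] at h1
      rw [div_eq_inv_mul] at h1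
      exact h1
  have hWinvCont : ∀ j, Continuous (Winv j) := by
    intro j
    have hepos := hA.epsPos j
    have hlip : LipschitzWith (Real.toNNReal (eps j)⁻¹) (Winv j) := by
      apply LipschitzWith.of_dist_le_mul
      intro u v
      rw [Real.dist_eq, Real.dist_eq, Real.coe_toNNReal _ (by positivity)]
      exact hWinvLip j u v
    exact hlip.continuous

  -- ===== the scalar equation =====
  set σ : ℝ := ∑ j, ν j with hσdef
  have hsumN : (∑ _j : Fin N, (1/N : ℝ)) = 1 := by
    rw [Finset.sum_const, Finset.card_univ, Fintype.card_fin, nsmul_eq_mul]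
    field_simp
  have hσ1 : σ ≤ 1 := by
    rw [hσdef, ← hsumN]
    exact Finset.sum_le_sum (fun j _ => hνleN j)
  set Φ : ℝ → ℝ → ℝ :=
    fun z S => (1 - σ) * S - ∑ j, Winv j (D j + z + ν j * S) / (1 + μ j) with hΦdef
  have hgap : ∀ z S T : ℝ, ∀ j, S ≤ T →
      0 ≤ Winv j (D j + z + ν j * S) / (1 + μ j)
        - Winv j (D j + z + ν j * T) / (1 + μ j) := by
    intro z S T j hST
    have h1 : D j + z + ν j * S ≤ D j + z + ν j * T := by
      linarith [mul_le_mul_of_nonneg_left hST (hνnn j)]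
    have h2 := hWinvAnti j _ _ h1
    have h3 := h1μ j
    apply sub_nonneg.mpr
    exact (div_le_div_iff_of_pos_right h3).mpr h2
  have hΦdiff : ∀ z S T : ℝ, Φ z T - Φ z S = (1 - σ) * (T - S)
      + ∑ j, (Winv j (D j + z + ν j * S) / (1 + μ j)
        - Winv j (D j + z + ν j * T) / (1 + μ j)) := by
    intro z S T
    simp only [hΦdef]
    rw [Finset.sum_sub_distrib]
    ring
  obtain ⟨c, hcpos, hslope⟩ :
      ∃ c : ℝ, 0 < c ∧ ∀ z S T : ℝ, S ≤ T → c * (T - S) ≤ Φ z T - Φ z S := by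
    obtain ⟨i0, hi0⟩ := hA.special
    by_cases hl : lam i0 < 1
    · have hσlt : σ < 1 := by
        rw [hσdef, ← hsumN]
        exact Finset.sum_lt_sum (fun j _ => hνleN j)
          ⟨i0, Finset.mem_univ _, hνltN i0 hl⟩
      refine ⟨1 - σ, by linarith, ?_⟩
      intro z S T hST
      rw [hΦdiff]
      have h1 := Finset.sum_nonneg (fun j (_ : j ∈ Finset.univ) => hgap z S T j hST)
      linarith
    · obtain ⟨R, hR, hRub⟩ := hi0.resolve_left hl
      have hlam1 : lam i0 = 1 := le_antisymm (hlam i0).2 (not_lt.mp hl)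
      have hμpos : 0 < μ i0 := by
        rw [hμ i0, hlam1]; positivity
      have hνpos : 0 < ν i0 := by
        simp only [hνdef]; exact div_pos hμpos (h1μ i0)
      refine ⟨ν i0 / (R * (1 + μ i0)), div_pos hνpos (mul_pos hR (h1μ i0)), ?_⟩
      intro z S T hST
      rw [hΦdiff]
      have hWdlb : ∀ t, -R ≤ Wd i0 t := by
        intro t
        have h1 := hRub (Real.exp t) (Real.exp_pos t)
        simp only [hWddef]
        have := hνnn i0
        linarith
      have hq3 : ∀ u v : ℝ, u ≤ v → (v - u) / R ≤ Winv i0 u - Winv i0 v := by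
        intro u v huv
        have hle := hWinvAnti i0 u v huv
        have h1 := slope_ge (hWder i0) hWdlb hle
        rw [hWeq, hWeq] at h1
        rw [div_le_iff₀ hR]
        nlinarith
      have hterm : ν i0 * (T - S) / (R * (1 + μ i0))
          ≤ Winv i0 (D i0 + z + ν i0 * S) / (1 + μ i0)
            - Winv i0 (D i0 + z + ν i0 * T) / (1 + μ i0) := by
        have h1 : D i0 + z + ν i0 * S ≤ D i0 + z + ν i0 * T := by
          linarith [mul_le_mul_of_nonneg_left hST (hνnn i0)]
        have h2 := hq3 _ _ h1
        have h3 : (D i0 + z + ν i0 * T - (D i0 + z + ν i0 * S)) = ν i0 * (T - S) := by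
          ring
        rw [h3] at h2
        rw [div_sub_div_same, ← div_div]
        exact (div_le_div_iff_of_pos_right (h1μ i0)).mpr h2
      have hsum1 := Finset.single_le_sum
        (f := fun j => Winv j (D j + z + ν j * S) / (1 + μ j)
          - Winv j (D j + z + ν j * T) / (1 + μ j))
        (fun j (_ : j ∈ Finset.univ) => hgap z S T j hST) (Finset.mem_univ i0)
      have hσnn : 0 ≤ (1 - σ) * (T - S) :=
        mul_nonneg (by linarith) (by linarith)
      have hc0 : ν i0 / (R * (1 + μ i0)) * (T - S) = ν i0 * (T - S) / (R * (1 + μ i0)) := by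
        ring
      rw [hc0]
      linarith
  have hΦcont : ∀ z, Continuous (Φ z) := by
    intro z
    simp only [hΦdef]
    apply Continuous.sub
    · exact continuous_const.mul continuous_id
    · apply continuous_finset_sum
      intro j _
      exact ((hWinvCont j).comp
        (continuous_const.add (continuous_const.mul continuous_id))).div_const _
  have hroot : ∀ z, ∃ S, Φ z S = 0 := by
    intro z
    obtain ⟨b, hb⟩ : ∃ b, Φ z 0 = b := ⟨_, rfl⟩
    have hcne : c ≠ 0 := ne_of_gt hcpos
    have hnn : (0:ℝ) ≤ (|b| + 1)/c := by positivity
    have h2 : c * ((|b| + 1)/c - 0) = |b| + 1 := by field_simp; ring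
    have hplus : (1:ℝ) ≤ Φ z ((|b| + 1)/c) := by
      have h1 := hslope z 0 ((|b| + 1)/c) hnn
      rw [h2, hb] at h1
      have h4 := neg_abs_le b
      linarith
    have h2' : c * (0 - -((|b| + 1)/c)) = |b| + 1 := by field_simp; ring
    have hminus : Φ z (-((|b| + 1)/c)) ≤ -1 := by
      have h1 := hslope z (-((|b| + 1)/c)) 0 (by linarith)
      rw [h2', hb] at h1
      have h4 := le_abs_self b
      linarith
    have hle : -((|b| + 1)/c) ≤ (|b| + 1)/c := by linarith
    have hmem : (0:ℝ) ∈ Set.Icc (Φ z (-((|b| + 1)/c))) (Φ z ((|b| + 1)/c)) :=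
      ⟨by linarith, by linarith⟩
    obtain ⟨S, _, hS⟩ := intermediate_value_Icc hle ((hΦcont z).continuousOn) hmem
    exact ⟨S, hS⟩
  choose Sz hSz using hroot
  have hSuniq : ∀ z S' : ℝ, Φ z S' = 0 → S' = Sz z := by
    intro z S' h'
    rcases lt_trichotomy S' (Sz z) with h | h | h
    · have h1 := hslope z S' (Sz z) (le_of_lt h)
      rw [hSz z, h'] at h1
      nlinarith
    · exact h
    · have h1 := hslope z (Sz z) S' (le_of_lt h)
      rw [hSz z, h'] at h1
      nlinarith

  -- ===== the inverse point =====
  set yz : ℝ → Fin N → ℝ :=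
    fun z j => (Winv j (D j + z + ν j * Sz z) + μ j * Sz z) / (1 + μ j) with hyzdef
  have h1μne : ∀ j, (1 + μ j) ≠ 0 := fun j => ne_of_gt (h1μ j)
  have hinv1 : ∀ j, (1 + μ j) * (1 + μ j)⁻¹ = 1 := fun j => mul_inv_cancel₀ (h1μne j)
  have hν' : ∀ j, ν j = μ j * (1 + μ j)⁻¹ := by
    intro j; simp only [hνdef]; rw [div_eq_mul_inv]
  have hterm : ∀ z j, yz z j = Winv j (D j + z + ν j * Sz z) / (1 + μ j) + ν j * Sz z := by
    intro z j
    simp only [hyzdef, div_eq_mul_inv]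
    rw [hν' j]
    ring
  have hysum : ∀ z, ∑ j, yz z j = Sz z := by
    intro z
    rw [Finset.sum_congr rfl (fun j _ => hterm z j), Finset.sum_add_distrib,
      ← Finset.sum_mul]
    have h0 := hSz z
    simp only [hΦdef] at h0
    rw [← hσdef]
    linarith
  have hGy : ∀ z, Gmap U μ (yz z) = fun j => D j + z := by
    intro z
    funext j
    have hesum : ∑ k ∈ Finset.univ.erase j, yz z k = Sz z - yz z j := by
      rw [Finset.sum_erase_eq_sub (Finset.mem_univ j), hysum z]
    show Vfun (U j) (yz z j - μ j * ∑ k ∈ Finset.univ.erase j, yz z k)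
        - μ j * ∑ k ∈ Finset.univ.erase j, yz z k = D j + z
    rw [hesum]
    have hWj := hWeq j (D j + z + ν j * Sz z)
    simp only [hWfdef] at hWj
    have harg : yz z j - μ j * (Sz z - yz z j) = Winv j (D j + z + ν j * Sz z) := by
      simp only [hyzdef, div_eq_mul_inv]
      linear_combination (Winv j (D j + z + ν j * Sz z) + μ j * Sz z) * hinv1 j
    have hμt : μ j * (Sz z - yz z j)
        = ν j * (Sz z - Winv j (D j + z + ν j * Sz z)) := by
      simp only [hyzdef, div_eq_mul_inv]
      rw [hν' j]
      linear_combination (-(μ j * Sz z)) * hinv1 j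
    rw [harg, hμt]
    linear_combination hWj
  have hYuniq : ∀ z y', Gmap U μ y' = (fun k => D k + z) → y' = yz z := by
    intro z y' hy'
    obtain ⟨S', hS'⟩ : ∃ S', ∑ k, y' k = S' := ⟨_, rfl⟩
    have hcomp : ∀ j, Wf j (y' j - μ j * (S' - y' j)) = D j + z + ν j * S' := by
      intro j
      have h1 : Gmap U μ y' j = D j + z := by rw [hy']
      have hesum : ∑ k ∈ Finset.univ.erase j, y' k = S' - y' j := by
        rw [Finset.sum_erase_eq_sub (Finset.mem_univ j), hS']
      simp only [Gmap] at h1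
      rw [hesum] at h1
      simp only [hWfdef]
      have hid : μ j * (S' - y' j)
          = ν j * (S' - (y' j - μ j * (S' - y' j))) := by
        rw [hν' j]
        linear_combination (-(μ j * (S' - y' j))) * hinv1 j
      linear_combination h1 + hid
    have ha : ∀ j, y' j - μ j * (S' - y' j) = Winv j (D j + z + ν j * S') :=
      fun j => hWuniq j _ _ (hcomp j)
    have hΦS' : Φ z S' = 0 := by
      simp only [hΦdef]
      have hsum2 : ∀ j, Winv j (D j + z + ν j * S') / (1 + μ j) = y' j - ν j * S' := by
        intro j
        rw [← ha j]
        rw [hν' j]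
        simp only [div_eq_mul_inv]
        linear_combination (y' j) * hinv1 j
      rw [Finset.sum_congr rfl (fun j _ => hsum2 j), Finset.sum_sub_distrib,
        ← Finset.sum_mul, hS', ← hσdef]
      ring
    have hS'eq : S' = Sz z := hSuniq z S' hΦS'
    funext j
    have h2 := ha j
    rw [hS'eq] at h2
    simp only [hyzdef]
    rw [← h2]
    simp only [div_eq_mul_inv]
    linear_combination (-(y' j)) * hinv1 j
  -- ===== growth bound =====
  set K0 : ℝ := ∑ j, (|Winv j 0| + (eps j)⁻¹ * |D j|) with hK0def
  set K1 : ℝ := ∑ j, (eps j)⁻¹ with hK1def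
  have hepsinv : ∀ j, (0:ℝ) ≤ (eps j)⁻¹ :=
    fun j => inv_nonneg.mpr (le_of_lt (hA.epsPos j))
  have hK0nn : 0 ≤ K0 :=
    Finset.sum_nonneg (fun j _ => add_nonneg (abs_nonneg _)
      (mul_nonneg (hepsinv j) (abs_nonneg _)))
  have hK1nn : 0 ≤ K1 := Finset.sum_nonneg (fun j _ => hepsinv j)
  have hWinv0 : ∀ j u, |Winv j u| ≤ |Winv j 0| + (eps j)⁻¹ * |u| := by
    intro j u
    have h1 := hWinvLip j u 0
    rw [sub_zero] at h1
    have h2 := abs_sub_abs_le_abs_sub (Winv j u) (Winv j 0)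
    linarith
  have hΦ0bd : ∀ z, |Φ z 0| ≤ K0 + K1 * |z| := by
    intro z
    have h1 : ∀ j, |Winv j (D j + z + ν j * 0) / (1 + μ j)|
        ≤ |Winv j 0| + (eps j)⁻¹ * |D j| + (eps j)⁻¹ * |z| := by
      intro j
      rw [mul_zero, add_zero, abs_div, abs_of_pos (h1μ j)]
      have h2 : |Winv j (D j + z)| ≤ |Winv j 0| + (eps j)⁻¹ * (|D j| + |z|) := by
        have h3 := hWinv0 j (D j + z)
        have h4 : |D j + z| ≤ |D j| + |z| := abs_add_le _ _
        nlinarith [hepsinv j]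
      have h5 : |Winv j (D j + z)| / (1 + μ j) ≤ |Winv j (D j + z)| :=
        div_le_self (abs_nonneg _) (by linarith [hμnn j])
      nlinarith [hepsinv j]
    have h6 : |Φ z 0| = |∑ j, Winv j (D j + z + ν j * 0) / (1 + μ j)| := by
      simp only [hΦdef]
      rw [mul_zero, zero_sub, abs_neg]
    rw [h6]
    calc |∑ j, Winv j (D j + z + ν j * 0) / (1 + μ j)|
        ≤ ∑ j, |Winv j (D j + z + ν j * 0) / (1 + μ j)| :=
          Finset.abs_sum_le_sum_abs _ _
      _ ≤ ∑ j, (|Winv j 0| + (eps j)⁻¹ * |D j| + (eps j)⁻¹ * |z|) :=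
          Finset.sum_le_sum (fun j _ => h1 j)
      _ = K0 + K1 * |z| := by
          rw [hK0def, hK1def, Finset.sum_add_distrib, ← Finset.sum_mul]
  have hSbd : ∀ z, |Sz z| ≤ (K0 + K1 * |z|) / c := by
    intro z
    have hΦ0 := hΦ0bd z
    rcases le_total 0 (Sz z) with h | h
    · have h1 := hslope z 0 (Sz z) h
      rw [hSz z] at h1
      have h4 := neg_abs_le (Φ z 0)
      rw [abs_of_nonneg h, le_div_iff₀ hcpos]
      nlinarith
    · have h1 := hslope z (Sz z) 0 h
      rw [hSz z] at h1
      have h4 := le_abs_self (Φ z 0)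
      rw [abs_of_nonpos h, le_div_iff₀ hcpos]
      nlinarith
  obtain ⟨C, hC0, hCb⟩ :
      ∃ C : ℝ, 0 ≤ C ∧ ∀ z j, |yz z j| ≤ C * (1 + |z|) := by
    refine ⟨K0 + K1 + (K1 + 1) * ((K0 + K1) / c), by positivity, ?_⟩
    intro z j
    obtain ⟨u, hu⟩ : ∃ u, D j + z + ν j * Sz z = u := ⟨_, rfl⟩
    have hS := hSbd z
    have ha1 : |yz z j| ≤ |Winv j u| + |Sz z| := by
      simp only [hyzdef, hu]
      rw [abs_div, abs_of_pos (h1μ j), div_le_iff₀ (h1μ j)]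
      have h2 : |Winv j u + μ j * Sz z| ≤ |Winv j u| + μ j * |Sz z| := by
        calc |Winv j u + μ j * Sz z| ≤ |Winv j u| + |μ j * Sz z| := abs_add_le _ _
          _ = |Winv j u| + μ j * |Sz z| := by
              rw [abs_mul, abs_of_nonneg (hμnn j)]
      nlinarith [abs_nonneg (Winv j u), abs_nonneg (Sz z), hμnn j]
    have ha2 : |Winv j u| ≤ |Winv j 0| + (eps j)⁻¹ * (|D j| + |z| + |Sz z|) := by
      have h2 := hWinv0 j u
      have h3 : |u| ≤ |D j| + |z| + |Sz z| := by
        rw [← hu]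
        calc |D j + z + ν j * Sz z| ≤ |D j + z| + |ν j * Sz z| := abs_add_le _ _
          _ ≤ |D j| + |z| + |Sz z| := by
              have h4 := abs_add_le (D j) z
              rw [abs_mul, abs_of_nonneg (hνnn j)]
              nlinarith [hν1 j, abs_nonneg (Sz z), hνnn j]
      nlinarith [mul_le_mul_of_nonneg_left h3 (hepsinv j)]
    have hK0j : |Winv j 0| + (eps j)⁻¹ * |D j| ≤ K0 :=
      Finset.single_le_sum (f := fun k => |Winv k 0| + (eps k)⁻¹ * |D k|)
        (fun k _ => add_nonneg (abs_nonneg _) (mul_nonneg (hepsinv k) (abs_nonneg _)))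
        (Finset.mem_univ j)
    have hK1j : (eps j)⁻¹ ≤ K1 :=
      Finset.single_le_sum (f := fun k => (eps k)⁻¹) (fun k _ => hepsinv k)
        (Finset.mem_univ j)
    have hstep1 : |yz z j| ≤ K0 + K1 * |z| + (K1 + 1) * |Sz z| := by
      have h5 : (eps j)⁻¹ * |z| ≤ K1 * |z| :=
        mul_le_mul_of_nonneg_right hK1j (abs_nonneg z)
      have h6 : (eps j)⁻¹ * |Sz z| ≤ K1 * |Sz z| :=
        mul_le_mul_of_nonneg_right hK1j (abs_nonneg (Sz z))
      nlinarith [ha1, ha2, hK0j, h5, h6]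
    have hz1 : K0 + K1 * |z| ≤ (K0 + K1) * (1 + |z|) := by
      nlinarith [abs_nonneg z, hK0nn, hK1nn]
    have hSb2 : |Sz z| ≤ (K0 + K1) * (1 + |z|) / c :=
      le_trans hS ((div_le_div_iff_of_pos_right hcpos).mpr hz1)
    have h7 : (K1 + 1) * |Sz z| ≤ (K1 + 1) * ((K0 + K1) * (1 + |z|) / c) :=
      mul_le_mul_of_nonneg_left hSb2 (by linarith)
    have h8 : (K0 + K1) * (1 + |z|) + (K1 + 1) * ((K0 + K1) * (1 + |z|) / c)
        = (K0 + K1 + (K1 + 1) * ((K0 + K1) / c)) * (1 + |z|) := by ring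
    linarith [hstep1, hz1, h7, h8]
  have hGinv : ∀ z : ℝ, Function.invFun (Gmap U μ) (fun j => D j + z) = yz z := by
    intro z
    apply hYuniq z
    exact Function.invFun_eq ⟨yz z, hGy z⟩

  -- ===== Part C : conjugate expectation =====
  intro i
  have hκpos := hA.epsPos i
  have hrra' : ∀ x > 0, eps i ≤ RRA (U i) x := by
    intro x hx
    have h1 := hrra i x hx
    have h2 := hνnn i
    linarith
  have hapos' : 0 < deriv (U i) 1 := hd1pos i 1 one_pos
  obtain ⟨a, haeq⟩ : ∃ a, deriv (U i) 1 = a := ⟨_, rfl⟩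
  have hapos : 0 < a := haeq ▸ hapos'
  obtain ⟨p, hpeq⟩ : ∃ p, (eps i)⁻¹ = p := ⟨_, rfl⟩
  have hppos : 0 < p := by rw [← hpeq]; exact inv_pos.mpr hκpos
  set e1 : ℝ := ((N:ℝ) - 1)⁻¹ with he1def
  have he1pos : 0 < e1 := by rw [he1def]; exact inv_pos.mpr hN1pos
  have he1le : e1 ≤ 1 := by rw [he1def]; exact inv_le_one_of_one_le₀ hN1
  set q : Ω → ℝ := fun ω => D i + Real.log (Z ω)
    + (∑ j ∈ Finset.univ.erase i, yz (Real.log (Z ω)) j) * (e1 * lam i) with hqdef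
  have hH : ∀ ω j, Hmap U μ Z D ω j = Real.exp (yz (Real.log (Z ω)) j) := by
    intro ω j
    show Real.exp (Function.invFun (Gmap U μ) (fun k => D k + Real.log (Z ω)) j) = _
    rw [hGinv (Real.log (Z ω))]
  have hxbar : ∀ ω, xbar (fun j ω' => Hmap U μ Z D ω' j) i ω
      = Real.exp ((∑ j ∈ Finset.univ.erase i, yz (Real.log (Z ω)) j) * e1) := by
    intro ω
    show (∏ j ∈ Finset.univ.erase i, Hmap U μ Z D ω j) ^ (((N:ℝ) - 1)⁻¹) = _
    rw [Finset.prod_congr rfl (fun j _ => hH ω j), ← Real.exp_sum,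
      Real.rpow_def_of_pos (Real.exp_pos _), Real.log_exp, ← he1def]
  have hXarg : ∀ ω, Real.exp (D i) * Z ω
      * (xbar (fun j ω' => Hmap U μ Z D ω' j) i ω) ^ (lam i) = Real.exp (q ω) := by
    intro ω
    rw [hxbar ω, Real.rpow_def_of_pos (Real.exp_pos _), Real.log_exp]
    have h1 : Real.exp (D i) * Z ω = Real.exp (D i + Real.log (Z ω)) := by
      rw [Real.exp_add, Real.exp_log (hZpos ω)]
    rw [h1, ← Real.exp_add]
    congr 1
    simp only [hqdef]
    ring
  have hqbd : ∀ ω, |q ω| ≤ (|D i| + (N:ℝ) * C) + (1 + (N:ℝ) * C) * |Real.log (Z ω)| := by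
    intro ω
    obtain ⟨z, hz⟩ : ∃ z, Real.log (Z ω) = z := ⟨_, rfl⟩
    obtain ⟨s, hs⟩ : ∃ s, ∑ j ∈ Finset.univ.erase i, yz z j = s := ⟨_, rfl⟩
    have hsb : |s| ≤ (N:ℝ) * C * (1 + |z|) := by
      rw [← hs]
      calc |∑ j ∈ Finset.univ.erase i, yz z j|
          ≤ ∑ j ∈ Finset.univ.erase i, |yz z j| := Finset.abs_sum_le_sum_abs _ _
        _ ≤ ∑ _j ∈ Finset.univ.erase i, C * (1 + |z|) :=
            Finset.sum_le_sum (fun j _ => hCb z j)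
        _ = ((Finset.univ.erase i).card : ℝ) * (C * (1 + |z|)) := by
            rw [Finset.sum_const, nsmul_eq_mul]
        _ ≤ (N:ℝ) * (C * (1 + |z|)) := by
            have h1 : ((Finset.univ.erase i).card : ℝ) ≤ (N:ℝ) := by
              have h2 : (Finset.univ.erase i).card ≤ (Finset.univ : Finset (Fin N)).card :=
                Finset.card_erase_le
              have h3 : (Finset.univ : Finset (Fin N)).card = N := by simp
              rw [h3] at h2
              exact_mod_cast h2
            have hmul : (0:ℝ) ≤ C * (1 + |z|) := mul_nonneg hC0 (by positivity)
            exact mul_le_mul_of_nonneg_right h1 hmul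
        _ = (N:ℝ) * C * (1 + |z|) := by ring
    have hm : |e1 * lam i| ≤ 1 := by
      rw [abs_of_nonneg (mul_nonneg (le_of_lt he1pos) (hlam i).1)]
      calc e1 * lam i ≤ e1 * 1 := mul_le_mul_of_nonneg_left (hlam i).2 (le_of_lt he1pos)
        _ ≤ 1 := by rw [mul_one]; exact he1le
    have h5 : |q ω| ≤ |D i| + |z| + |s| * |e1 * lam i| := by
      simp only [hqdef]
      rw [hz, hs]
      calc |D i + z + s * (e1 * lam i)| ≤ |D i + z| + |s * (e1 * lam i)| := abs_add_le _ _
        _ ≤ |D i| + |z| + |s| * |e1 * lam i| := by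
            rw [abs_mul]
            linarith [abs_add_le (D i) z]
    have h6 : |s| * |e1 * lam i| ≤ (N:ℝ) * C * (1 + |z|) :=
      le_trans (mul_le_of_le_one_right (abs_nonneg s) hm) hsb
    rw [hz]
    nlinarith [h5, h6]
  obtain ⟨K, hKeq⟩ : ∃ K, p * (1 + (N:ℝ) * C) = K := ⟨_, rfl⟩
  have hpt : ∀ ω, conj (U i) (Real.exp (D i) * Z ω
      * (xbar (fun j ω' => Hmap U μ Z D ω' j) i ω) ^ (lam i))
      ≤ (U i 1 + a) + (a * Real.exp (p * Real.log a + p * (|D i| + (N:ℝ) * C)))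
        * ((Z ω) ^ K + (Z ω) ^ (-K)) := by
    intro ω
    rw [hXarg ω]
    have hc1 := conj_bound (hA.smooth i) (hA.inada0 i) hκpos hrra' (Real.exp_pos (q ω))
    rw [haeq, hpeq] at hc1
    have h2 : (a / Real.exp (q ω)) ^ p = Real.exp ((Real.log a - q ω) * p) := by
      rw [Real.rpow_def_of_pos (div_pos hapos (Real.exp_pos _)),
        Real.log_div (ne_of_gt hapos) (ne_of_gt (Real.exp_pos _)), Real.log_exp]
    have h3 : (Real.log a - q ω) * p
        ≤ (p * Real.log a + p * (|D i| + (N:ℝ) * C)) + K * |Real.log (Z ω)| := by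
      rw [← hKeq]
      nlinarith [mul_le_mul_of_nonneg_left (neg_le_abs (q ω)) (le_of_lt hppos),
        mul_le_mul_of_nonneg_left (hqbd ω) (le_of_lt hppos)]
    have h6 := exp_abs_le_rpow (hZpos ω) K
    have h7 : (a / Real.exp (q ω)) ^ p
        ≤ Real.exp (p * Real.log a + p * (|D i| + (N:ℝ) * C))
          * ((Z ω) ^ K + (Z ω) ^ (-K)) := by
      rw [h2]
      calc Real.exp ((Real.log a - q ω) * p)
          ≤ Real.exp ((p * Real.log a + p * (|D i| + (N:ℝ) * C)) + K * |Real.log (Z ω)|) :=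
            Real.exp_le_exp.mpr h3
        _ = Real.exp (p * Real.log a + p * (|D i| + (N:ℝ) * C))
            * Real.exp (K * |Real.log (Z ω)|) := Real.exp_add _ _
        _ ≤ _ := mul_le_mul_of_nonneg_left h6 (le_of_lt (Real.exp_pos _))
    nlinarith [hc1, mul_le_mul_of_nonneg_left h7 (le_of_lt hapos)]
  have hint : Integrable (fun ω => (U i 1 + a)
      + (a * Real.exp (p * Real.log a + p * (|D i| + (N:ℝ) * C)))
        * ((Z ω) ^ K + (Z ω) ^ (-K))) P := by
    apply Integrable.add (integrable_const _)
    exact ((hZmom K).add (hZmom (-K))).const_mul _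
  have hlt : ∫⁻ ω, ENNReal.ofReal (conj (U i) (Real.exp (D i) * Z ω
      * (xbar (fun j ω' => Hmap U μ Z D ω' j) i ω) ^ (lam i))) ∂P < ⊤ :=
    lt_of_le_of_lt (lintegral_mono (fun ω => ENNReal.ofReal_le_ofReal (hpt ω)))
      hint.lintegral_lt_top
  show eExp P _ < ⊤
  rw [eExp, sub_eq_add_neg]
  apply EReal.add_lt_top
  · rw [lt_top_iff_ne_top] at hlt
    simp [hlt]
  · simp
end

section
/- Under Assumption (A) on the utilities and Assumption (Z) on the density, the map D ↦ H(D) = exp(G^{-1}(D + ln Z·𝟙)) is continuous from ℝ^N into random vectors with respect to almost-sure convergence, and for every p > 0 it is continuous as a map from ℝ^N into L^p(ℙ)^N and into L^p(ℚ)^N, where dℚ = Z dℙ. In particular, h(D) = ln E^ℚ[H(D)] (componentwise) is finite for every D ∈ ℝ^N. -/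
open MeasureTheory Filter Set
open scoped ENNReal NNReal

/-- MVT, all cases. -/
lemma mvt_all {f f' : ℝ → ℝ} (hf : ∀ x, HasDerivAt f (f' x) x) (x y : ℝ) :
    ∃ ξ, f y - f x = f' ξ * (y - x) := by
  have hcont : Continuous f := by
    rw [continuous_iff_continuousAt]; exact fun z => (hf z).differentiableAt.continuousAt
  rcases lt_trichotomy x y with h | h | h
  · obtain ⟨c, _, hc⟩ := exists_hasDerivAt_eq_slope f f' h hcont.continuousOn
      (fun z _ => hf z)
    exact ⟨c, by rw [hc, div_mul_cancel₀ _ (sub_ne_zero.2 h.ne')]⟩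
  · exact ⟨0, by simp [h]⟩
  · obtain ⟨c, _, hc⟩ := exists_hasDerivAt_eq_slope f f' h hcont.continuousOn
      (fun z _ => hf z)
    refine ⟨c, ?_⟩
    rw [hc, div_mul_eq_mul_div, eq_div_iff (sub_ne_zero.2 h.ne')]; ring

/-- A function with derivative ≤ -c < 0 everywhere is bijective-onto each value. -/
lemma anti_bij {f f' : ℝ → ℝ} (hf : ∀ x, HasDerivAt f (f' x) x) {c : ℝ} (hc : 0 < c)
    (hle : ∀ x, f' x ≤ -c) (t : ℝ) : ∃! x, f x = t := by
  have hcont : Continuous f := by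
    rw [continuous_iff_continuousAt]; exact fun z => (hf z).differentiableAt.continuousAt
  have hanti : StrictAnti f := by
    refine strictAnti_of_deriv_neg (fun z => ?_)
    rw [(hf z).deriv]; linarith [hle z]
  set a : ℝ := min 0 ((f 0 - t) / c) with ha
  set b : ℝ := max 0 ((f 0 - t) / c) with hb
  have hab : a ≤ b := le_trans (min_le_left _ _) (le_max_left _ _)
  have hfa : t ≤ f a := by
    obtain ⟨ξ, hξ⟩ := mvt_all hf 0 a
    have h1 : a ≤ 0 := min_le_left _ _
    have h2 : a ≤ (f 0 - t) / c := min_le_right _ _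
    have h3 : 0 ≤ (-(f' ξ + c)) * (-a) := mul_nonneg (by linarith [hle ξ]) (by linarith)
    have h4 : a * c ≤ f 0 - t := (le_div_iff₀ hc).1 h2
    nlinarith [hξ]
  have hfb : f b ≤ t := by
    obtain ⟨ξ, hξ⟩ := mvt_all hf 0 b
    have h1 : 0 ≤ b := le_max_left _ _
    have h2 : (f 0 - t) / c ≤ b := le_max_right _ _
    have h3 : (f' ξ + c) * b ≤ 0 := mul_nonpos_of_nonpos_of_nonneg (by linarith [hle ξ]) h1
    have h4 : f 0 - t ≤ b * c := by
      rw [div_le_iff₀ hc] at h2; linarith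
    nlinarith [hξ]
  obtain ⟨x, hx, hfx⟩ := intermediate_value_Icc' hab hcont.continuousOn ⟨hfb, hfa⟩
  exact ⟨x, hfx, fun y hy => hanti.injective (hy.trans hfx.symm)⟩

/-- An expansive increasing (Lipschitz) function is bijective-onto each value. -/
lemma expansive_bij {g : ℝ → ℝ} {δ C : ℝ} (hδ : 0 < δ)
    (hlo : ∀ s t : ℝ, s ≤ t → δ * (t - s) ≤ g t - g s)
    (hhi : ∀ s t : ℝ, s ≤ t → g t - g s ≤ C * (t - s)) (r : ℝ) : ∃! S, g S = r := by
  have hmono : StrictMono g := by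
    intro s t hst
    have := hlo s t hst.le
    nlinarith
  have hcont : Continuous g := by
    have hC : 0 ≤ C := by nlinarith [hlo 0 1 zero_le_one, hhi 0 1 zero_le_one]
    refine (LipschitzWith.of_dist_le_mul (K := ⟨C, hC⟩) (fun s t => ?_)).continuous
    rcases le_total s t with h | h
    · have := hhi s t h; have := hlo s t h
      rw [Real.dist_eq, Real.dist_eq, abs_of_nonpos (by nlinarith), abs_of_nonpos (by linarith)]
      push_cast; show -(g s - g t) ≤ C * -(s - t); nlinarith
    · have := hhi t s h; have := hlo t s h
      rw [Real.dist_eq, Real.dist_eq, abs_of_nonneg (by nlinarith), abs_of_nonneg (by linarith)]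
      push_cast; show g s - g t ≤ C * (s - t); nlinarith
  set a : ℝ := min 0 ((r - g 0) / δ) with ha
  set b : ℝ := max 0 ((r - g 0) / δ) with hb
  have hab : a ≤ b := le_trans (min_le_left _ _) (le_max_left _ _)
  have hga : g a ≤ r := by
    have h1 : a ≤ 0 := min_le_left _ _
    have h2 : a ≤ (r - g 0) / δ := min_le_right _ _
    have h4 : a * δ ≤ r - g 0 := (le_div_iff₀ hδ).1 h2
    have := hlo a 0 h1
    nlinarith
  have hgb : r ≤ g b := by
    have h1 : 0 ≤ b := le_max_left _ _
    have h2 : (r - g 0) / δ ≤ b := le_max_right _ _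
    have h4 : r - g 0 ≤ b * δ := by rw [div_le_iff₀ hδ] at h2; linarith
    have := hlo 0 b h1
    nlinarith
  obtain ⟨x, hx, hfx⟩ := intermediate_value_Icc hab hcont.continuousOn ⟨hga, hgb⟩
  exact ⟨x, hfx, fun y hy => hmono.injective (hy.trans hfx.symm)⟩


section perU
variable {U : ℝ → ℝ} (hmono : StrictMonoOn U (Set.Ioi 0))
  (hsm : ContDiffOn ℝ 2 U (Set.Ioi 0)) {β : ℝ} (hβ : 0 < β)
  (hLB : ∀ x > 0, β ≤ RRA U x)

include hsm in
lemma hasDerivAt_derivU {x : ℝ} (hx : 0 < x) : HasDerivAt U (deriv U x) x := by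
  have h1 : DifferentiableOn ℝ U (Set.Ioi 0) := hsm.differentiableOn (by norm_num)
  exact (h1.differentiableAt (isOpen_Ioi.mem_nhds hx)).hasDerivAt

include hsm in
lemma hasDerivAt_derivU' {x : ℝ} (hx : 0 < x) :
    HasDerivAt (deriv U) (deriv (deriv U) x) x := by
  have h1 : ContDiffOn ℝ 1 (deriv U) (Set.Ioi 0) :=
    hsm.deriv_of_isOpen isOpen_Ioi (by norm_num)
  have h2 : DifferentiableOn ℝ (deriv U) (Set.Ioi 0) := h1.differentiableOn (by norm_num)
  exact (h2.differentiableAt (isOpen_Ioi.mem_nhds hx)).hasDerivAt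

include hmono hsm hβ hLB in
lemma derivU_pos_s15 {x : ℝ} (hx : 0 < x) : 0 < deriv U x := by
  have hne : deriv U x ≠ 0 := by
    intro h
    have := hLB x hx
    rw [RRA, h, div_zero] at this
    linarith
  have hnonneg : 0 ≤ deriv U x := by
    have hd := hasDerivAt_derivU hsm hx
    have hs := hasDerivAt_iff_tendsto_slope.1 hd
    have hle : nhdsWithin x (Set.Ioi x) ≤ nhdsWithin x {x}ᶜ :=
      nhdsWithin_mono x (fun z hz => ne_of_gt hz)
    refine ge_of_tendsto (hs.mono_left hle) ?_
    filter_upwards [self_mem_nhdsWithin] with z hz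
    rw [slope_def_field]
    have h1 : U x < U z := hmono hx (lt_trans hx hz) hz
    have h2 : (0:ℝ) < z - x := by simp only [mem_Ioi] at hz; linarith
    exact le_of_lt (div_pos (by linarith) h2)
  exact lt_of_le_of_ne hnonneg (Ne.symm hne)

include hmono hsm hβ hLB in
lemma hasDerivAt_Vfun_s15 (y : ℝ) :
    HasDerivAt (Vfun U) (-(RRA U (Real.exp y))) y := by
  have hxpos : 0 < Real.exp y := Real.exp_pos y
  have h1 : HasDerivAt (fun z => deriv U (Real.exp z))
      (deriv (deriv U) (Real.exp y) * Real.exp y) y :=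
    (hasDerivAt_derivU' hsm hxpos).comp y (Real.hasDerivAt_exp y)
  have h2 : deriv U (Real.exp y) ≠ 0 :=
    ne_of_gt (derivU_pos_s15 hmono hsm hβ hLB hxpos)
  have h3 := h1.log h2
  convert h3 using 1
  · exact rfl
  rw [RRA]
  field_simp

end perU

set_option maxHeartbeats 1000000 in
theorem invFun_coordLip {N : ℕ} (hN : 2 ≤ N) (U : Fin N → ℝ → ℝ) (lam μ eps : Fin N → ℝ)
    (hlam : ∀ i, lam i ∈ Set.Icc (0:ℝ) 1) (hμ : ∀ i, μ i = lam i / ((N : ℝ) - 1))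
    (hA : AssumpA U lam μ eps) :
    ∃ K : ℝ, 0 ≤ K ∧ ∀ x x' : Fin N → ℝ, ∀ i,
      |Function.invFun (Gmap U μ) x i - Function.invFun (Gmap U μ) x' i|
        ≤ K * ∑ j, |x j - x' j| := by
  classical
  have hNR : (1:ℝ) ≤ (N:ℝ) - 1 := by
    have : (2:ℝ) ≤ (N:ℝ) := by exact_mod_cast hN
    linarith
  have hNpos : (0:ℝ) < (N:ℝ) := by linarith
  have hμ0 : ∀ i, 0 ≤ μ i := fun i => by
    rw [hμ]; exact div_nonneg (hlam i).1 (by linarith)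
  have hμ1 : ∀ i, (0:ℝ) < 1 + μ i := fun i => by linarith [hμ0 i]
  have hμlam : ∀ i, μ i * ((N:ℝ) - 1) = lam i := fun i => by
    rw [hμ]; field_simp
  set β : Fin N → ℝ := fun i => eps i + μ i / (1 + μ i) with hβdef
  have hβpos : ∀ i, 0 < β i := fun i =>
    add_pos_of_pos_of_nonneg (hA.epsPos i) (div_nonneg (hμ0 i) (hμ1 i).le)
  have hkey : ∀ i, (1 + μ i) * β i = (1 + μ i) * eps i + μ i := fun i => by
    have h : (1 + μ i) ≠ 0 := (hμ1 i).ne'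
    show (1 + μ i) * (eps i + μ i / (1 + μ i)) = (1 + μ i) * eps i + μ i
    field_simp
  have hVd : ∀ i y, HasDerivAt (Vfun (U i)) (-(RRA (U i) (Real.exp y))) y := fun i y =>
    hasDerivAt_Vfun_s15 (hA.mono i) (hA.smooth i) (hβpos i) (fun x hx => hA.rraLB i x hx) y
  have hRRAβ : ∀ i y, β i ≤ RRA (U i) (Real.exp y) := fun i y => hA.rraLB i _ (Real.exp_pos y)
  have hcε : ∀ i, (0:ℝ) < (1 + μ i) * eps i := fun i => mul_pos (hμ1 i) (hA.epsPos i)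
  -- the coordinate function and its derivative
  have hfd : ∀ (i : Fin N) (S u : ℝ),
      HasDerivAt (fun u => Vfun (U i) ((1 + μ i) * u - μ i * S) + μ i * u - μ i * S)
        ((1 + μ i) * (-(RRA (U i) (Real.exp ((1 + μ i) * u - μ i * S)))) + μ i) u := by
    intro i S u
    have h1 : HasDerivAt (fun u : ℝ => (1 + μ i) * u - μ i * S) (1 + μ i) u := by
      simpa using ((hasDerivAt_id u).const_mul (1 + μ i)).sub_const (μ i * S)
    have h2 := (hVd i ((1 + μ i) * u - μ i * S)).comp u h1
    have h3 : HasDerivAt (fun u : ℝ => μ i * u - μ i * S) (μ i) u := by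
      simpa using ((hasDerivAt_id u).const_mul (μ i)).sub_const (μ i * S)
    have h4 := h2.add h3
    have heq : (fun x => (Vfun (U i) ∘ fun u => (1 + μ i) * u - μ i * S) x + (μ i * x - μ i * S))
        = (fun u => Vfun (U i) ((1 + μ i) * u - μ i * S) + μ i * u - μ i * S) := by
      funext x; simp [Function.comp]; ring
    simp only [Pi.add_def] at h4
    rw [heq] at h4
    exact h4.congr_deriv (by ring)
  have hfd_le : ∀ (i : Fin N) (S u : ℝ),
      (1 + μ i) * (-(RRA (U i) (Real.exp ((1 + μ i) * u - μ i * S)))) + μ i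
        ≤ -((1 + μ i) * eps i) := by
    intro i S u
    have hv := hRRAβ i ((1 + μ i) * u - μ i * S)
    have := mul_le_mul_of_nonneg_left hv (hμ1 i).le
    rw [hkey i] at this
    linarith
  have hex : ∀ (i : Fin N) (t S : ℝ),
      ∃! u, Vfun (U i) ((1 + μ i) * u - μ i * S) + μ i * u - μ i * S = t := by
    intro i t S
    exact anti_bij (f' := fun u => (1 + μ i) *
        (-(RRA (U i) (Real.exp ((1 + μ i) * u - μ i * S)))) + μ i)
      (hfd i S) (hcε i) (hfd_le i S) t
  choose ρ hρ using fun i t S => (hex i t S).exists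
  have hρu : ∀ (i : Fin N) (t S u : ℝ),
      Vfun (U i) ((1 + μ i) * u - μ i * S) + μ i * u - μ i * S = t → u = ρ i t S :=
    fun i t S u hu => (hex i t S).unique hu (hρ i t S)
  -- master increment identity
  have hmaster : ∀ (i : Fin N) (t t' S S' : ℝ), ∃ ξ : ℝ,
      -(RRA (U i) (Real.exp ξ)) * ((1 + μ i) * (ρ i t' S' - ρ i t S) - μ i * (S' - S))
        = (t' - t) - μ i * (ρ i t' S' - ρ i t S) + μ i * (S' - S) := by
    intro i t t' S S'
    obtain ⟨ξ, hξ⟩ := mvt_all (f' := fun y => -(RRA (U i) (Real.exp y))) (hVd i)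
      ((1 + μ i) * ρ i t S - μ i * S) ((1 + μ i) * ρ i t' S' - μ i * S')
    refine ⟨ξ, ?_⟩
    have e1 := hρ i t S
    have e2 := hρ i t' S'
    have : Vfun (U i) ((1 + μ i) * ρ i t' S' - μ i * S')
        - Vfun (U i) ((1 + μ i) * ρ i t S - μ i * S)
        = (t' - t) - μ i * (ρ i t' S' - ρ i t S) + μ i * (S' - S) := by linarith
    rw [hξ] at this
    rw [← this]; ring
  -- basic positivity of the "denominator"
  have hDpos : ∀ (i : Fin N) (ξ : ℝ),
      (1 + μ i) * eps i ≤ (1 + μ i) * RRA (U i) (Real.exp ξ) - μ i := by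
    intro i ξ
    have := mul_le_mul_of_nonneg_left (hRRAβ i ξ) (hμ1 i).le
    rw [hkey i] at this
    linarith
  -- upper increment bound in S
  have hS_ub : ∀ (i : Fin N) (t S S' : ℝ), S ≤ S' →
      ρ i t S' - ρ i t S ≤ μ i / (1 + μ i) * (S' - S) := by
    intro i t S S' hSS
    obtain ⟨ξ, hξ⟩ := hmaster i t t S S'
    set v := RRA (U i) (Real.exp ξ) with hvdef
    set a := ρ i t S' - ρ i t S with hadef
    set s := S' - S with hsdef
    have hs : 0 ≤ s := by simp [hsdef]; linarith
    have e1 : a * ((1 + μ i) * v - μ i) = μ i * s * (v - 1) := by linear_combination -hξ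
    have hD := hDpos i ξ
    have hDp : 0 < (1 + μ i) * v - μ i := lt_of_lt_of_le (hcε i) hD
    rw [div_mul_eq_mul_div, le_div_iff₀ (hμ1 i)]
    have e2 : a * (1 + μ i) * ((1 + μ i) * v - μ i)
        = μ i * s * ((1 + μ i) * v - μ i) - μ i * s := by linear_combination (1 + μ i) * e1
    nlinarith [e2, hDp, mul_nonneg (hμ0 i) hs]
  -- Lipschitz bound in S
  set L : Fin N → ℝ := fun i => max 1 (μ i / ((1 + μ i) * eps i)) with hLdef
  have hL0 : ∀ i, 0 ≤ L i := fun i => le_trans zero_le_one (le_max_left _ _)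
  have hS_lb : ∀ (i : Fin N) (t S S' : ℝ), S ≤ S' →
      |ρ i t S' - ρ i t S| ≤ L i * (S' - S) := by
    intro i t S S' hSS
    obtain ⟨ξ, hξ⟩ := hmaster i t t S S'
    set v := RRA (U i) (Real.exp ξ) with hvdef
    set a := ρ i t S' - ρ i t S with hadef
    set s := S' - S with hsdef
    have hs : 0 ≤ s := by simp [hsdef]; linarith
    have e1 : a * ((1 + μ i) * v - μ i) = μ i * s * (v - 1) := by linear_combination -hξ
    have hD := hDpos i ξ
    have hDp : 0 < (1 + μ i) * v - μ i := lt_of_lt_of_le (hcε i) hD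
    have hL1 : (1:ℝ) ≤ L i := le_max_left _ _
    have hL2 : μ i / ((1 + μ i) * eps i) ≤ L i := le_max_right _ _
    have hL2' : μ i ≤ L i * ((1 + μ i) * eps i) := (div_le_iff₀ (hcε i)).1 hL2
    rw [abs_le]
    constructor
    · -- a ≥ -L s : worst case v < 1
      rcases le_or_gt 1 v with hv1 | hv1
      · have h5 : 0 ≤ a * ((1 + μ i) * v - μ i) := by
          rw [e1]; exact mul_nonneg (mul_nonneg (hμ0 i) hs) (by linarith)
        nlinarith [mul_nonneg (hL0 i) hs, hDp]
      · have e2 : (-a) * ((1 + μ i) * v - μ i) = μ i * s * (1 - v) := by linear_combination -e1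
        have h6 : μ i * s * (1 - v) ≤ μ i * s := by
          nlinarith [mul_nonneg (hμ0 i) hs, hRRAβ i ξ, hβpos i]
        have h7 : μ i * s ≤ L i * ((1 + μ i) * eps i) * s := mul_le_mul_of_nonneg_right hL2' hs
        have h8 : L i * ((1 + μ i) * eps i) * s ≤ L i * ((1 + μ i) * v - μ i) * s :=
          mul_le_mul_of_nonneg_right (mul_le_mul_of_nonneg_left hD (hL0 i)) hs
        nlinarith [hDp]
    · -- a ≤ L s
      have h1 := hS_ub i t S S' hSS
      have h2 : μ i / (1 + μ i) ≤ 1 := by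
        rw [div_le_one (hμ1 i)]; linarith
      calc a ≤ μ i / (1 + μ i) * s := h1
        _ ≤ 1 * s := mul_le_mul_of_nonneg_right h2 hs
        _ ≤ L i * s := mul_le_mul_of_nonneg_right hL1 hs
  -- Lipschitz bound in t
  have ht_b : ∀ (i : Fin N) (t t' S : ℝ),
      |ρ i t' S - ρ i t S| ≤ |t' - t| / eps i := by
    intro i t t' S
    obtain ⟨ξ, hξ⟩ := hmaster i t t' S S
    set v := RRA (U i) (Real.exp ξ) with hvdef
    set a := ρ i t' S - ρ i t S with hadef
    have e1 : a * ((1 + μ i) * v - μ i) = t - t' := by linear_combination -hξ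
    have hD := hDpos i ξ
    have hε : eps i ≤ (1 + μ i) * v - μ i := by
      have h1 : eps i ≤ (1 + μ i) * eps i := by
        nlinarith [mul_nonneg (hμ0 i) (hA.epsPos i).le]
      linarith
    rw [le_div_iff₀ (hA.epsPos i)]
    have h2 : |a| * eps i ≤ |a| * ((1 + μ i) * v - μ i) :=
      mul_le_mul_of_nonneg_left hε (abs_nonneg a)
    have h3 : |a| * ((1 + μ i) * v - μ i) = |t - t'| := by
      rw [← abs_of_nonneg (le_trans (hA.epsPos i).le hε), ← abs_mul, e1]
    rw [abs_sub_comm t' t]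
    linarith

  -- bound μ/(1+μ) ≤ 1/N
  have hμN : ∀ i, μ i / (1 + μ i) ≤ 1 / (N:ℝ) := by
    intro i
    rw [div_le_div_iff₀ (hμ1 i) hNpos]
    have h1 := hμlam i
    have h2 := (hlam i).2
    nlinarith
  obtain ⟨i₀, hsp⟩ := hA.special
  have hspecial : ∃ cv : ℝ, cv < 1 / (N:ℝ) ∧
      ∀ (t S S' : ℝ), S ≤ S' → ρ i₀ t S' - ρ i₀ t S ≤ cv * (S' - S) := by
    by_cases hl1 : lam i₀ < 1
    · refine ⟨μ i₀ / (1 + μ i₀), ?_, fun t S S' h => hS_ub i₀ t S S' h⟩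
      rw [div_lt_div_iff₀ (hμ1 i₀) hNpos]
      have h1 := hμlam i₀
      nlinarith
    · rcases hsp with h | ⟨R, hR0, hRB⟩
      · exact absurd h hl1
      have hlam1 : lam i₀ = 1 := le_antisymm (hlam i₀).2 (not_lt.1 hl1)
      have hμpos : 0 < μ i₀ := by
        have h1 := hμlam i₀
        rw [hlam1] at h1
        nlinarith
      have hβR : β i₀ ≤ R := le_trans (hA.rraLB i₀ 1 one_pos) (hRB 1 one_pos)
      have hDR : (1 + μ i₀) * eps i₀ ≤ (1 + μ i₀) * R - μ i₀ := by
        have h1 := mul_le_mul_of_nonneg_left hβR (hμ1 i₀).le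
        rw [hkey i₀] at h1
        linarith
      have hDRp : 0 < (1 + μ i₀) * R - μ i₀ := lt_of_lt_of_le (hcε i₀) hDR
      refine ⟨μ i₀ * (R - 1) / ((1 + μ i₀) * R - μ i₀), ?_, ?_⟩
      · have h1 : μ i₀ * (R - 1) / ((1 + μ i₀) * R - μ i₀) < μ i₀ / (1 + μ i₀) := by
          rw [div_lt_div_iff₀ hDRp (hμ1 i₀)]
          nlinarith
        exact lt_of_lt_of_le h1 (hμN i₀)
      · intro t S S' hSS
        obtain ⟨ξ, hξ⟩ := hmaster i₀ t t S S'
        set v := RRA (U i₀) (Real.exp ξ) with hvdef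
        set a := ρ i₀ t S' - ρ i₀ t S with hadef
        set s := S' - S with hsdef
        have hs : 0 ≤ s := by simp [hsdef]; linarith
        have e1 : a * ((1 + μ i₀) * v - μ i₀) = μ i₀ * s * (v - 1) := by linear_combination -hξ
        have hDp : 0 < (1 + μ i₀) * v - μ i₀ := lt_of_lt_of_le (hcε i₀) (hDpos i₀ ξ)
        have hvR : v ≤ R := hRB _ (Real.exp_pos ξ)
        have key : (a * ((1 + μ i₀) * R - μ i₀) - μ i₀ * s * (R - 1)) * ((1 + μ i₀) * v - μ i₀)
            = μ i₀ * s * (v - R) := by linear_combination ((1 + μ i₀) * R - μ i₀) * e1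
        have h9 : (a * ((1 + μ i₀) * R - μ i₀) - μ i₀ * s * (R - 1)) * ((1 + μ i₀) * v - μ i₀)
            ≤ 0 := by
          rw [key]
          have h9' : μ i₀ * s * (v - R) ≤ μ i₀ * s * 0 :=
            mul_le_mul_of_nonneg_left (by linarith) (mul_nonneg (hμ0 i₀) hs)
          simpa using h9'
        have h10 : a * ((1 + μ i₀) * R - μ i₀) - μ i₀ * s * (R - 1) ≤ 0 :=
          le_of_mul_le_mul_right (by rw [zero_mul]; exact h9) hDp
        rw [div_mul_eq_mul_div, le_div_iff₀ hDRp]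
        linarith [h10]
  obtain ⟨cv, hcv, hcv1⟩ := hspecial
  set c : Fin N → ℝ := fun i => if i = i₀ then cv else μ i / (1 + μ i) with hcdef
  have hc1 : ∀ (i : Fin N) (t S S' : ℝ), S ≤ S' → ρ i t S' - ρ i t S ≤ c i * (S' - S) := by
    intro i t S S' hSS
    by_cases h : i = i₀
    · subst h; simpa [hcdef] using hcv1 t S S' hSS
    · simpa [hcdef, h] using hS_ub i t S S' hSS
  have hcsum : ∑ i, c i < 1 := by
    have h1 : ∀ i ∈ Finset.univ, c i ≤ 1 / (N:ℝ) := by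
      intro i _
      by_cases h : i = i₀
      · subst h; simp only [hcdef, if_pos rfl]; exact hcv.le
      · simp only [hcdef, if_neg h]; exact hμN i
    have h2 : ∑ i : Fin N, c i < ∑ _i : Fin N, (1 / (N:ℝ)) := by
      refine Finset.sum_lt_sum h1 ⟨i₀, Finset.mem_univ _, ?_⟩
      simp only [hcdef, if_pos rfl]; exact hcv
    have h3 : ∑ _i : Fin N, (1 / (N:ℝ)) = 1 := by
      rw [Finset.sum_const, Finset.card_univ, Fintype.card_fin, nsmul_eq_mul]
      field_simp
    linarith
  have hδpos : 0 < 1 - ∑ i, c i := by linarith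
  set δ : ℝ := 1 - ∑ i, c i with hδdef
  set Ltot : ℝ := ∑ i, L i with hLtotdef
  have hLtot0 : 0 ≤ Ltot := Finset.sum_nonneg (fun i _ => hL0 i)
  set g : (Fin N → ℝ) → ℝ → ℝ := fun d S => S - ∑ i, ρ i (d i) S with hgdef
  have hglo : ∀ d (S S' : ℝ), S ≤ S' → δ * (S' - S) ≤ g d S' - g d S := by
    intro d S S' hSS
    have h1 : ∑ i, ρ i (d i) S' - ∑ i, ρ i (d i) S = ∑ i, (ρ i (d i) S' - ρ i (d i) S) :=
      (Finset.sum_sub_distrib _ _).symm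
    have h2 : ∑ i, (ρ i (d i) S' - ρ i (d i) S) ≤ ∑ i, c i * (S' - S) :=
      Finset.sum_le_sum (fun i _ => hc1 i (d i) S S' hSS)
    have h3 : ∑ i, c i * (S' - S) = (∑ i, c i) * (S' - S) := by rw [Finset.sum_mul]
    have h4 : δ * (S' - S) = (S' - S) - (∑ i, c i) * (S' - S) := by rw [hδdef]; ring
    simp only [hgdef]
    rw [h4, ← h3]
    linarith
  have hghi : ∀ d (S S' : ℝ), S ≤ S' → g d S' - g d S ≤ (1 + Ltot) * (S' - S) := by
    intro d S S' hSS
    have h1 : ∑ i, ρ i (d i) S' - ∑ i, ρ i (d i) S = ∑ i, (ρ i (d i) S' - ρ i (d i) S) :=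
      (Finset.sum_sub_distrib _ _).symm
    have h2 : ∑ i, (-(L i * (S' - S))) ≤ ∑ i, (ρ i (d i) S' - ρ i (d i) S) := by
      refine Finset.sum_le_sum (fun i _ => ?_)
      have h := abs_le.1 (hS_lb i (d i) S S' hSS)
      linarith [h.1]
    have h3 : ∑ i, (-(L i * (S' - S))) = -(Ltot * (S' - S)) := by
      rw [hLtotdef, Finset.sum_mul, ← Finset.sum_neg_distrib]
    have h4 : (1 + Ltot) * (S' - S) = (S' - S) + Ltot * (S' - S) := by ring
    simp only [hgdef]
    rw [h4]
    rw [h3] at h2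
    linarith
  have hSex : ∀ d, ∃! S, g d S = 0 := fun d => expansive_bij hδpos (hglo d) (hghi d) 0
  choose Sstar hSstar using fun d => (hSex d).exists
  have hSuniq : ∀ d S, g d S = 0 → S = Sstar d := fun d S h => (hSex d).unique h (hSstar d)
  set y : (Fin N → ℝ) → Fin N → ℝ := fun d i => ρ i (d i) (Sstar d) with hydef
  have hsumy : ∀ d, ∑ i, y d i = Sstar d := by
    intro d
    have h := hSstar d
    simp only [hgdef] at h
    simp only [hydef]
    linarith
  have hGy : ∀ d, Gmap U μ (y d) = d := by
    intro d; funext i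
    have hE : ∑ j ∈ Finset.univ.erase i, y d j = Sstar d - y d i := by
      rw [Finset.sum_erase_eq_sub (Finset.mem_univ i), hsumy d]
    show Vfun (U i) (y d i - μ i * ∑ j ∈ Finset.univ.erase i, y d j)
        - μ i * ∑ j ∈ Finset.univ.erase i, y d j = d i
    rw [hE]
    have harg : y d i - μ i * (Sstar d - y d i) = (1 + μ i) * (y d i) - μ i * Sstar d := by
      ring
    rw [harg]
    have h := hρ i (d i) (Sstar d)
    simp only [hydef]
    linarith [h]
  have hrep : ∀ w, w = y (Gmap U μ w) := by
    intro w
    set t := Gmap U μ w with htdef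
    set S := ∑ j, w j with hSdef
    have step1 : ∀ i, w i = ρ i (t i) S := by
      intro i
      refine hρu i (t i) S (w i) ?_
      have hE : ∑ j ∈ Finset.univ.erase i, w j = S - w i := by
        rw [Finset.sum_erase_eq_sub (Finset.mem_univ i)]
      have ht : t i = Vfun (U i) (w i - μ i * (S - w i)) - μ i * (S - w i) := by
        rw [htdef]
        show Vfun (U i) (w i - μ i * ∑ j ∈ Finset.univ.erase i, w j)
            - μ i * ∑ j ∈ Finset.univ.erase i, w j = _
        rw [hE]
      have harg : w i - μ i * (S - w i) = (1 + μ i) * (w i) - μ i * S := by ring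
      rw [harg] at ht
      linarith [ht]
    have step2 : g t S = 0 := by
      simp only [hgdef]
      have h : ∑ i, ρ i (t i) S = ∑ i, w i :=
        Finset.sum_congr rfl (fun i _ => (step1 i).symm)
      rw [h]
      exact sub_eq_zero_of_eq hSdef
    have step3 : S = Sstar t := hSuniq t S step2
    funext i
    simp only [hydef]
    rw [← step3]
    exact step1 i
  have hInj : Function.Injective (Gmap U μ) := by
    intro w w' h
    rw [hrep w, hrep w', h]
  have hPhi : ∀ x, Function.invFun (Gmap U μ) x = y x := by
    intro x
    have h1 : Gmap U μ (Function.invFun (Gmap U μ) x) = x := Function.invFun_eq ⟨y x, hGy x⟩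
    exact hInj (h1.trans (hGy x).symm)
  set E : ℝ := ∑ i, (eps i)⁻¹ with hEdef
  have hE0 : 0 ≤ E := Finset.sum_nonneg (fun i _ => inv_nonneg.2 (hA.epsPos i).le)
  have hEi : ∀ i, (eps i)⁻¹ ≤ E := fun i =>
    Finset.single_le_sum (fun j _ => inv_nonneg.2 (hA.epsPos j).le) (Finset.mem_univ i)
  have hsumabs : ∀ (x x' : Fin N → ℝ), (0:ℝ) ≤ ∑ j, |x j - x' j| := fun x x' =>
    Finset.sum_nonneg (fun j _ => abs_nonneg _)
  have htone : ∀ (i : Fin N) (t t' S : ℝ), |ρ i t S - ρ i t' S| ≤ E * |t - t'| := by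
    intro i t t' S
    have h1 := ht_b i t' t S
    have h2 : |t - t'| / eps i ≤ E * |t - t'| := by
      rw [div_eq_inv_mul]
      exact mul_le_mul_of_nonneg_right (hEi i) (abs_nonneg _)
    exact le_trans h1 h2
  have hSstarLip : ∀ d d', |Sstar d - Sstar d'| ≤ E / δ * ∑ j, |d j - d' j| := by
    intro d d'
    have h0 : δ * |Sstar d - Sstar d'| ≤ |g d' (Sstar d) - g d' (Sstar d')| := by
      rcases le_total (Sstar d') (Sstar d) with h | h
      · have hg := hglo d' _ _ h
        rw [abs_of_nonneg (by linarith), abs_of_nonneg (by nlinarith [hδpos])]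
        linarith
      · have hg := hglo d' _ _ h
        rw [abs_of_nonpos (by linarith), abs_of_nonpos (by nlinarith [hδpos])]
        linarith
    have h1 : g d' (Sstar d) - g d' (Sstar d') = ∑ i, (ρ i (d i) (Sstar d) - ρ i (d' i) (Sstar d)) := by
      have e1 := hSstar d
      have e2 := hSstar d'
      simp only [hgdef] at e1 e2 ⊢
      rw [Finset.sum_sub_distrib]
      linarith
    have h2 : |∑ i, (ρ i (d i) (Sstar d) - ρ i (d' i) (Sstar d))| ≤ E * ∑ j, |d j - d' j| := by
      calc |∑ i, (ρ i (d i) (Sstar d) - ρ i (d' i) (Sstar d))|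
          ≤ ∑ i, |ρ i (d i) (Sstar d) - ρ i (d' i) (Sstar d)| := Finset.abs_sum_le_sum_abs _ _
        _ ≤ ∑ i, E * |d i - d' i| := Finset.sum_le_sum (fun i _ => htone i (d i) (d' i) _)
        _ = E * ∑ j, |d j - d' j| := by rw [← Finset.mul_sum]
    rw [h1] at h0
    rw [div_mul_eq_mul_div, le_div_iff₀ hδpos]
    calc |Sstar d - Sstar d'| * δ = δ * |Sstar d - Sstar d'| := by ring
      _ ≤ E * ∑ j, |d j - d' j| := le_trans h0 h2
  refine ⟨Ltot * (E / δ) + E, add_nonneg (mul_nonneg hLtot0 (div_nonneg hE0 hδpos.le)) hE0, ?_⟩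
  intro x x' i
  rw [hPhi x, hPhi x']
  simp only [hydef]
  have hT : |ρ i (x i) (Sstar x) - ρ i (x i) (Sstar x')| ≤ L i * |Sstar x - Sstar x'| := by
    rcases le_total (Sstar x) (Sstar x') with h | h
    · have hb := hS_lb i (x i) _ _ h
      have he : |Sstar x - Sstar x'| = Sstar x' - Sstar x := by
        rw [abs_sub_comm]; exact abs_of_nonneg (by linarith)
      rw [he, abs_sub_comm]
      exact hb
    · have hb := hS_lb i (x i) _ _ h
      have he : |Sstar x - Sstar x'| = Sstar x - Sstar x' := abs_of_nonneg (by linarith)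
      rw [he]
      exact hb
  have hTt : |ρ i (x i) (Sstar x') - ρ i (x' i) (Sstar x')| ≤ E * ∑ j, |x j - x' j| := by
    have h1 := htone i (x i) (x' i) (Sstar x')
    have h2 : |x i - x' i| ≤ ∑ j, |x j - x' j| :=
      Finset.single_le_sum (f := fun j => |x j - x' j|) (fun j _ => abs_nonneg _)
        (Finset.mem_univ i)
    calc |ρ i (x i) (Sstar x') - ρ i (x' i) (Sstar x')| ≤ E * |x i - x' i| := h1
      _ ≤ E * ∑ j, |x j - x' j| := mul_le_mul_of_nonneg_left h2 hE0
  have hLi : L i ≤ Ltot := Finset.single_le_sum (fun j _ => hL0 j) (Finset.mem_univ i)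
  have hS2 := hSstarLip x x'
  have htri := abs_sub_le (ρ i (x i) (Sstar x)) (ρ i (x i) (Sstar x')) (ρ i (x' i) (Sstar x'))
  have hstep : L i * |Sstar x - Sstar x'| ≤ Ltot * (E / δ * ∑ j, |x j - x' j|) := by
    calc L i * |Sstar x - Sstar x'| ≤ Ltot * |Sstar x - Sstar x'| :=
        mul_le_mul_of_nonneg_right hLi (abs_nonneg _)
      _ ≤ Ltot * (E / δ * ∑ j, |x j - x' j|) := mul_le_mul_of_nonneg_left hS2 hLtot0
  calc |ρ i (x i) (Sstar x) - ρ i (x' i) (Sstar x')|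
      ≤ |ρ i (x i) (Sstar x) - ρ i (x i) (Sstar x')|
        + |ρ i (x i) (Sstar x') - ρ i (x' i) (Sstar x')| := htri
    _ ≤ Ltot * (E / δ * ∑ j, |x j - x' j|) + E * ∑ j, |x j - x' j| := by
        linarith [hT, hTt, hstep]
    _ = (Ltot * (E / δ) + E) * ∑ j, |x j - x' j| := by ring


set_option maxHeartbeats 1000000 in
theorem stmt15 {Ω : Type*} [MeasurableSpace Ω] (P : Measure Ω) [IsProbabilityMeasure P]
    (Z : Ω → ℝ) (hZmeas : Measurable Z) (hZpos : ∀ ω, 0 < Z ω)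
    (hZ1 : ∫ ω, Z ω ∂P = 1)
    (hZmom : ∀ r : ℝ, Integrable (fun ω => Z ω ^ r) P)
    (N : ℕ) (hN : 2 ≤ N) (U : Fin N → ℝ → ℝ) (lam μ eps : Fin N → ℝ)
    (hlam : ∀ i, lam i ∈ Set.Icc (0:ℝ) 1)
    (hμ : ∀ i, μ i = lam i / ((N : ℝ) - 1))
    (hA : AssumpA U lam μ eps) :
    -- continuity with respect to almost-sure convergence
    (∀ (Dseq : ℕ → Fin N → ℝ) (D₀ : Fin N → ℝ),
      Filter.Tendsto Dseq Filter.atTop (nhds D₀) →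
      ∀ᵐ ω ∂P, Filter.Tendsto (fun n => Hmap U μ Z (Dseq n) ω)
        Filter.atTop (nhds (Hmap U μ Z D₀ ω))) ∧
    -- continuity into L^p(ℙ) and L^p(ℚ), dℚ = Z dℙ, for every p > 0
    (∀ p : ℝ, 0 < p → ∀ i : Fin N, ∀ D₀ : Fin N → ℝ,
      Filter.Tendsto
        (fun D => eLpNorm (fun ω => Hmap U μ Z D ω i - Hmap U μ Z D₀ ω i)
          (ENNReal.ofReal p) P) (nhds D₀) (nhds 0) ∧
      Filter.Tendsto
        (fun D => eLpNorm (fun ω => Hmap U μ Z D ω i - Hmap U μ Z D₀ ω i)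
          (ENNReal.ofReal p)
          (P.withDensity fun ω => ENNReal.ofReal (Z ω))) (nhds D₀) (nhds 0)) ∧
    -- finiteness of h(D) = ln E^ℚ[H(D)]
    (∀ (D : Fin N → ℝ) (i : Fin N),
      0 < ∫⁻ ω, ENNReal.ofReal (Hmap U μ Z D ω i)
          ∂(P.withDensity fun ω => ENNReal.ofReal (Z ω)) ∧
      ∫⁻ ω, ENNReal.ofReal (Hmap U μ Z D ω i)
          ∂(P.withDensity fun ω => ENNReal.ofReal (Z ω)) < ⊤) := by
  classical
  obtain ⟨K, hK0, hKlip⟩ := invFun_coordLip hN U lam μ eps hlam hμ hA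
  set Φ := Function.invFun (Gmap U μ) with hPhidef
  set C0 : ℝ := ∑ i, |Φ (fun _ => 0) i| with hC0def
  have hC00 : 0 ≤ C0 := Finset.sum_nonneg (fun i _ => abs_nonneg _)
  have hPhibnd : ∀ (x : Fin N → ℝ) i, |Φ x i| ≤ C0 + K * ∑ j, |x j| := by
    intro x i
    have h1 := hKlip x (fun _ => 0) i
    simp only [sub_zero] at h1
    have h2 := abs_sub_abs_le_abs_sub (Φ x i) (Φ (fun _ => 0) i)
    have h3 : |Φ (fun _ => 0) i| ≤ C0 :=
      Finset.single_le_sum (f := fun i' => |Φ (fun _ => 0) i'|)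
        (fun j _ => abs_nonneg _) (Finset.mem_univ i)
    linarith
  set A : ℝ := K * N with hAdef
  have hA0 : 0 ≤ A := mul_nonneg hK0 (Nat.cast_nonneg N)
  have hHle : ∀ (D : Fin N → ℝ) (i : Fin N) (ω : Ω),
      Hmap U μ Z D ω i
        ≤ Real.exp (C0 + K * ∑ j, |D j|) * Real.exp (A * |Real.log (Z ω)|) := by
    intro D i ω
    show Real.exp (Φ (fun j => D j + Real.log (Z ω)) i) ≤ _
    rw [← Real.exp_add]
    apply Real.exp_le_exp.2
    have h1 := hPhibnd (fun j => D j + Real.log (Z ω)) i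
    have h2 : ∑ j : Fin N, |D j + Real.log (Z ω)|
        ≤ (∑ j, |D j|) + (N:ℝ) * |Real.log (Z ω)| := by
      calc ∑ j : Fin N, |D j + Real.log (Z ω)|
          ≤ ∑ j : Fin N, (|D j| + |Real.log (Z ω)|) :=
            Finset.sum_le_sum (fun j _ => abs_add_le _ _)
        _ = (∑ j, |D j|) + (N:ℝ) * |Real.log (Z ω)| := by
            rw [Finset.sum_add_distrib, Finset.sum_const, Finset.card_univ, Fintype.card_fin,
              nsmul_eq_mul]
    have h3 := le_trans (le_abs_self _) h1
    have h4 := mul_le_mul_of_nonneg_left h2 hK0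
    rw [hAdef]
    nlinarith [h3, h4]
  have hexpA : ∀ ω, Real.exp (A * |Real.log (Z ω)|) ≤ Z ω ^ A + Z ω ^ (-A) := by
    intro ω
    have hz := hZpos ω
    have h1 : Z ω ^ A = Real.exp (Real.log (Z ω) * A) := Real.rpow_def_of_pos hz A
    have h2 : Z ω ^ (-A) = Real.exp (Real.log (Z ω) * (-A)) := Real.rpow_def_of_pos hz (-A)
    rcases le_total 0 (Real.log (Z ω)) with h | h
    · rw [abs_of_nonneg h, mul_comm, ← h1]
      linarith [Real.rpow_pos_of_pos hz (-A)]
    · rw [abs_of_nonpos h]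
      have h3 : A * -Real.log (Z ω) = Real.log (Z ω) * (-A) := by ring
      rw [h3, ← h2]
      linarith [Real.rpow_pos_of_pos hz A]
  have hHpos : ∀ (D : Fin N → ℝ) (i : Fin N) (ω : Ω), 0 < Hmap U μ Z D ω i := by
    intro D i ω
    exact Real.exp_pos _
  have hHmeas : ∀ (D : Fin N → ℝ) (i : Fin N), Measurable fun ω => Hmap U μ Z D ω i := by
    intro D i
    have hlip : LipschitzWith (Real.toNNReal (K * N)) (fun v : ℝ => Φ (fun j => D j + v) i) := by
      apply LipschitzWith.of_dist_le_mul
      intro v v'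
      rw [Real.dist_eq, Real.dist_eq]
      have h1 := hKlip (fun j => D j + v) (fun j => D j + v') i
      have h2 : ∑ j : Fin N, |(D j + v) - (D j + v')| = (N:ℝ) * |v - v'| := by
        have : ∀ j : Fin N, |(D j + v) - (D j + v')| = |v - v'| := by
          intro j; congr 1; ring
        rw [Finset.sum_congr rfl (fun j _ => this j), Finset.sum_const, Finset.card_univ,
          Fintype.card_fin, nsmul_eq_mul]
      rw [h2] at h1
      have h3 : (Real.toNNReal (K * N) : ℝ) = K * N :=
        Real.coe_toNNReal _ (mul_nonneg hK0 (Nat.cast_nonneg N))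
      rw [h3]
      calc |Φ (fun j => D j + v) i - Φ (fun j => D j + v') i| ≤ K * ((N:ℝ) * |v - v'|) := h1
        _ = K * (N:ℝ) * |v - v'| := by ring
    have hc : Continuous fun v : ℝ => Real.exp (Φ (fun j => D j + v) i) :=
      Real.continuous_exp.comp hlip.continuous
    exact hc.measurable.comp hZmeas.log
  have hHcont : ∀ (Ds : ℕ → Fin N → ℝ) (D₀ : Fin N → ℝ), Tendsto Ds atTop (nhds D₀) →
      ∀ (ω : Ω) (i : Fin N),
      Tendsto (fun n => Hmap U μ Z (Ds n) ω i) atTop (nhds (Hmap U μ Z D₀ ω i)) := by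
    intro Ds D₀ hconv ω i
    have hsum0 : Tendsto (fun n => ∑ j, |Ds n j - D₀ j|) atTop (nhds 0) := by
      have h1 : ∀ j : Fin N, Tendsto (fun n => |Ds n j - D₀ j|) atTop (nhds 0) := by
        intro j
        have h := ((tendsto_pi_nhds.1 hconv) j).sub_const (D₀ j)
        rw [sub_self] at h
        simpa using h.abs
      have h2 := tendsto_finset_sum Finset.univ (fun j (_ : j ∈ Finset.univ) => h1 j)
      simpa using h2
    have hphi : Tendsto (fun n => Φ (fun j => Ds n j + Real.log (Z ω)) i) atTop
        (nhds (Φ (fun j => D₀ j + Real.log (Z ω)) i)) := by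
      rw [tendsto_iff_dist_tendsto_zero]
      refine squeeze_zero (fun n => dist_nonneg) (fun n => ?_)
        (by simpa using hsum0.const_mul K)
      rw [Real.dist_eq]
      have h1 := hKlip (fun j => Ds n j + Real.log (Z ω)) (fun j => D₀ j + Real.log (Z ω)) i
      have h2 : ∑ j : Fin N, |(Ds n j + Real.log (Z ω)) - (D₀ j + Real.log (Z ω))|
          = ∑ j, |Ds n j - D₀ j| := by
        refine Finset.sum_congr rfl (fun j _ => ?_)
        congr 1; ring
      rwa [h2] at h1
    exact (Real.continuous_exp.continuousAt.tendsto.comp hphi)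
  refine ⟨?_, ?_, ?_⟩
  · -- a.s. continuity
    intro Dseq D₀ hconv
    refine Eventually.of_forall (fun ω => ?_)
    rw [tendsto_pi_nhds]
    intro i
    exact hHcont Dseq D₀ hconv ω i
  · -- L^p continuity
    intro p hp i D₀
    have hq0 : ENNReal.ofReal p ≠ 0 := by
      simp only [ne_eq, ENNReal.ofReal_eq_zero, not_le]; exact hp
    have hqt : ENNReal.ofReal p ≠ ⊤ := ENNReal.ofReal_ne_top
    have hqr : (ENNReal.ofReal p).toReal = p := ENNReal.toReal_ofReal hp.le
    have hxy : ∀ x y : ℝ, 0 ≤ x → 0 ≤ y → (x + y) ^ p ≤ 2 ^ p * (x ^ p + y ^ p) := by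
      intro x y hx hy
      have h1 : x + y ≤ 2 * max x y := by
        rcases le_total x y with h | h
        · rw [max_eq_right h]; linarith
        · rw [max_eq_left h]; linarith
      have h2 : (x + y) ^ p ≤ (2 * max x y) ^ p :=
        Real.rpow_le_rpow (by linarith) h1 hp.le
      have h3 : (2 * max x y) ^ p = 2 ^ p * (max x y) ^ p :=
        Real.mul_rpow (by norm_num) (le_max_of_le_left hx)
      have h4 : (max x y) ^ p ≤ x ^ p + y ^ p := by
        rcases le_total x y with h | h
        · rw [max_eq_right h]; linarith [Real.rpow_nonneg hx p]
        · rw [max_eq_left h]; linarith [Real.rpow_nonneg hy p]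
      have h5 : (2:ℝ) ^ p * (max x y) ^ p ≤ 2 ^ p * (x ^ p + y ^ p) :=
        mul_le_mul_of_nonneg_left h4 (Real.rpow_nonneg (by norm_num) p)
      linarith
    -- sequence-based argument, shared for both measures
    have hcore : ∀ (Ds : ℕ → Fin N → ℝ), Tendsto Ds atTop (nhds D₀) →
        ∃ W : Ω → ℝ, (∀ ω, 0 ≤ W ω) ∧ Integrable W P ∧
          Integrable (fun ω => Z ω * W ω) P ∧
          (∀ n ω, (‖Hmap U μ Z (Ds n) ω i - Hmap U μ Z D₀ ω i‖₊ : ℝ≥0∞) ^ p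
            ≤ ENNReal.ofReal (W ω)) := by
      intro Ds hDs
      have h1 : Tendsto (fun n => ∑ j, |Ds n j|) atTop (nhds (∑ j, |D₀ j|)) :=
        tendsto_finset_sum _ (fun j _ => ((tendsto_pi_nhds.1 hDs) j).abs)
      obtain ⟨M₀, hM₀⟩ := h1.bddAbove_range
      set M : ℝ := max M₀ (∑ j, |D₀ j|) with hMdef
      have hM0 : (∑ j, |D₀ j|) ≤ M := le_max_right _ _
      have hMn : ∀ n, (∑ j, |Ds n j|) ≤ M := fun n =>
        le_trans (hM₀ ⟨n, rfl⟩) (le_max_left _ _)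
      set Cc : ℝ := Real.exp (C0 + K * M) with hCcdef
      have hCc0 : 0 < Cc := Real.exp_pos _
      set cst : ℝ := (2 * Cc) ^ p * 2 ^ p with hcstdef
      have hcst0 : 0 ≤ cst :=
        mul_nonneg (Real.rpow_nonneg (by linarith) p) (Real.rpow_nonneg (by norm_num) p)
      refine ⟨fun ω => cst * (Z ω ^ (A * p) + Z ω ^ (-(A * p))), ?_, ?_, ?_, ?_⟩
      · intro ω
        exact mul_nonneg hcst0 (add_nonneg (Real.rpow_pos_of_pos (hZpos ω) _).le
          (Real.rpow_pos_of_pos (hZpos ω) _).le)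
      · exact ((hZmom (A * p)).add (hZmom (-(A * p)))).const_mul cst
      · have heq : (fun ω => Z ω * (cst * (Z ω ^ (A * p) + Z ω ^ (-(A * p)))))
            = fun ω => cst * (Z ω ^ (1 + A * p) + Z ω ^ (1 + -(A * p))) := by
          funext ω
          rw [Real.rpow_add (hZpos ω), Real.rpow_add (hZpos ω), Real.rpow_one]
          ring
        rw [heq]
        exact ((hZmom (1 + A * p)).add (hZmom (1 + -(A * p)))).const_mul cst
      · intro n ω
        have hz := hZpos ω
        have hZA : 0 < Z ω ^ A + Z ω ^ (-A) := by
          have := Real.rpow_pos_of_pos hz A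
          have := Real.rpow_pos_of_pos hz (-A)
          linarith
        have hB : ∀ (D : Fin N → ℝ), (∑ j, |D j|) ≤ M →
            Hmap U μ Z D ω i ≤ Cc * (Z ω ^ A + Z ω ^ (-A)) := by
          intro D hDM
          calc Hmap U μ Z D ω i
              ≤ Real.exp (C0 + K * ∑ j, |D j|) * Real.exp (A * |Real.log (Z ω)|) :=
                hHle D i ω
            _ ≤ Cc * (Z ω ^ A + Z ω ^ (-A)) := by
                apply mul_le_mul
                · rw [hCcdef]; apply Real.exp_le_exp.2
                  nlinarith [mul_le_mul_of_nonneg_left hDM hK0]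
                · exact hexpA ω
                · positivity
                · linarith [hCc0]
        have habs : |Hmap U μ Z (Ds n) ω i - Hmap U μ Z D₀ ω i|
            ≤ 2 * (Cc * (Z ω ^ A + Z ω ^ (-A))) := by
          have hb1 := hB (Ds n) (hMn n)
          have hb2 := hB D₀ hM0
          have hp1 := hHpos (Ds n) i ω
          have hp2 := hHpos D₀ i ω
          rw [abs_sub_le_iff]
          constructor <;> nlinarith
        rw [← enorm_eq_nnnorm, Real.enorm_eq_ofReal_abs, ENNReal.ofReal_rpow_of_nonneg (abs_nonneg _) hp.le]
        apply ENNReal.ofReal_le_ofReal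
        have h6 : |Hmap U μ Z (Ds n) ω i - Hmap U μ Z D₀ ω i| ^ p
            ≤ (2 * (Cc * (Z ω ^ A + Z ω ^ (-A)))) ^ p :=
          Real.rpow_le_rpow (abs_nonneg _) habs hp.le
        have h7 : (2 * (Cc * (Z ω ^ A + Z ω ^ (-A)))) ^ p
            = (2 * Cc) ^ p * (Z ω ^ A + Z ω ^ (-A)) ^ p := by
          rw [← mul_assoc, Real.mul_rpow (by linarith) hZA.le]
        have h8 : (Z ω ^ A + Z ω ^ (-A)) ^ p
            ≤ 2 ^ p * ((Z ω ^ A) ^ p + (Z ω ^ (-A)) ^ p) :=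
          hxy _ _ (Real.rpow_pos_of_pos hz A).le (Real.rpow_pos_of_pos hz (-A)).le
        have h9 : (Z ω ^ A) ^ p = Z ω ^ (A * p) := (Real.rpow_mul hz.le A p).symm
        have h10 : (Z ω ^ (-A)) ^ p = Z ω ^ (-(A * p)) := by
          rw [← Real.rpow_mul hz.le]
          congr 1; ring
        rw [h9, h10] at h8
        calc |Hmap U μ Z (Ds n) ω i - Hmap U μ Z D₀ ω i| ^ p
            ≤ (2 * Cc) ^ p * (Z ω ^ A + Z ω ^ (-A)) ^ p := by rw [← h7]; exact h6
          _ ≤ (2 * Cc) ^ p * (2 ^ p * (Z ω ^ (A * p) + Z ω ^ (-(A * p)))) := by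
              apply mul_le_mul_of_nonneg_left _ (Real.rpow_nonneg (by linarith) p)
              calc (Z ω ^ A + Z ω ^ (-A)) ^ p
                  ≤ 2 ^ p * (Z ω ^ (A * p) + Z ω ^ (-(A * p))) := h8
                _ ≤ 2 ^ p * (Z ω ^ (A * p) + Z ω ^ (-(A * p))) := le_refl _
          _ = cst * (Z ω ^ (A * p) + Z ω ^ (-(A * p))) := by rw [hcstdef]; ring
    have hFmeas : ∀ (Ds : ℕ → Fin N → ℝ) (n : ℕ),
        Measurable fun ω => (‖Hmap U μ Z (Ds n) ω i - Hmap U μ Z D₀ ω i‖₊ : ℝ≥0∞) ^ p :=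
      fun Ds n => ENNReal.continuous_rpow_const.measurable.comp
        (((hHmeas (Ds n) i).sub (hHmeas D₀ i)).enorm)
    have hF0 : ∀ (Ds : ℕ → Fin N → ℝ), Tendsto Ds atTop (nhds D₀) → ∀ ω,
        Tendsto (fun n => (‖Hmap U μ Z (Ds n) ω i - Hmap U μ Z D₀ ω i‖₊ : ℝ≥0∞) ^ p)
          atTop (nhds 0) := by
      intro Ds hDs ω
      have hd : Tendsto (fun n => Hmap U μ Z (Ds n) ω i - Hmap U μ Z D₀ ω i) atTop
          (nhds 0) := by
        have := (hHcont Ds D₀ hDs ω i).sub (tendsto_const_nhds (x := Hmap U μ Z D₀ ω i))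
        simpa using this
      have habs : Tendsto (fun n => |Hmap U μ Z (Ds n) ω i - Hmap U μ Z D₀ ω i|) atTop
          (nhds 0) := by simpa using hd.abs
      have hofReal := (ENNReal.continuous_ofReal.tendsto 0).comp habs
      simp only [ENNReal.ofReal_zero] at hofReal
      have hr := (ENNReal.continuous_rpow_const (y := p)).tendsto 0
      have := hr.comp hofReal
      rw [ENNReal.zero_rpow_of_pos hp] at this
      have heq : (fun n => (‖Hmap U μ Z (Ds n) ω i - Hmap U μ Z D₀ ω i‖₊ : ℝ≥0∞) ^ p)
          = fun n => (ENNReal.ofReal |Hmap U μ Z (Ds n) ω i - Hmap U μ Z D₀ ω i|) ^ p := by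
        funext n; rw [← enorm_eq_nnnorm, Real.enorm_eq_ofReal_abs]
      rw [heq]
      exact this
    have hrpow0 : ∀ (u : ℕ → ℝ≥0∞), Tendsto u atTop (nhds 0) →
        Tendsto (fun n => (u n) ^ (1 / p)) atTop (nhds 0) := by
      intro u hu
      have hr := (ENNReal.continuous_rpow_const (y := 1 / p)).tendsto 0
      have := hr.comp hu
      rwa [ENNReal.zero_rpow_of_pos (by positivity)] at this
    constructor
    · -- measure P
      refine tendsto_iff_seq_tendsto.2 (fun Ds hDs => ?_)
      obtain ⟨W, hW0, hWint, _, hdb⟩ := hcore Ds hDs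
      have hbfin : ∫⁻ ω, ENNReal.ofReal (W ω) ∂P ≠ ⊤ :=
        ((hasFiniteIntegral_iff_ofReal (Eventually.of_forall hW0)).1
          hWint.hasFiniteIntegral).ne
      have hlim := tendsto_lintegral_of_dominated_convergence
        (μ := P)
        (F := fun n ω => (‖Hmap U μ Z (Ds n) ω i - Hmap U μ Z D₀ ω i‖₊ : ℝ≥0∞) ^ p)
        (f := fun _ => 0)
        (fun ω => ENNReal.ofReal (W ω)) (hFmeas Ds)
        (fun n => Eventually.of_forall (hdb n)) hbfin
        (Eventually.of_forall (hF0 Ds hDs))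
      simp only [lintegral_zero] at hlim
      have heq : ((fun D => eLpNorm (fun ω => Hmap U μ Z D ω i - Hmap U μ Z D₀ ω i)
          (ENNReal.ofReal p) P) ∘ Ds)
          = fun n => (∫⁻ ω, (‖Hmap U μ Z (Ds n) ω i - Hmap U μ Z D₀ ω i‖₊ : ℝ≥0∞) ^ p ∂P)
            ^ (1 / p) := by
        funext n
        simp only [Function.comp_apply]
        rw [eLpNorm_eq_lintegral_rpow_enorm_toReal hq0 hqt, hqr]
        simp only [enorm_eq_nnnorm]
      rw [heq]
      exact hrpow0 _ hlim
    · -- measure Q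
      refine tendsto_iff_seq_tendsto.2 (fun Ds hDs => ?_)
      obtain ⟨W, hW0, hWint, hZWint, hdb⟩ := hcore Ds hDs
      have hZmeas' : Measurable fun ω => ENNReal.ofReal (Z ω) := hZmeas.ennreal_ofReal
      have hbfin : ∫⁻ ω, ENNReal.ofReal (Z ω) * ENNReal.ofReal (W ω) ∂P ≠ ⊤ := by
        have heq : (fun ω => ENNReal.ofReal (Z ω) * ENNReal.ofReal (W ω))
            = fun ω => ENNReal.ofReal (Z ω * W ω) := by
          funext ω; rw [ENNReal.ofReal_mul (hZpos ω).le]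
        rw [heq]
        exact ((hasFiniteIntegral_iff_ofReal (Eventually.of_forall
          (fun ω => mul_nonneg (hZpos ω).le (hW0 ω)))).1 hZWint.hasFiniteIntegral).ne
      have hlim := tendsto_lintegral_of_dominated_convergence
        (μ := P)
        (F := fun n ω => ENNReal.ofReal (Z ω)
          * (‖Hmap U μ Z (Ds n) ω i - Hmap U μ Z D₀ ω i‖₊ : ℝ≥0∞) ^ p)
        (f := fun _ => 0)
        (fun ω => ENNReal.ofReal (Z ω) * ENNReal.ofReal (W ω))
        (fun n => hZmeas'.mul (hFmeas Ds n))
        (fun n => Eventually.of_forall (fun ω => mul_le_mul_right (hdb n ω) _)) hbfin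
        (Eventually.of_forall (fun ω => by
          have h := ENNReal.Tendsto.const_mul (a := ENNReal.ofReal (Z ω))
            (hF0 Ds hDs ω) (Or.inr ENNReal.ofReal_ne_top)
          simpa using h))
      simp only [lintegral_zero] at hlim
      have heq : ((fun D => eLpNorm (fun ω => Hmap U μ Z D ω i - Hmap U μ Z D₀ ω i)
          (ENNReal.ofReal p) (P.withDensity fun ω => ENNReal.ofReal (Z ω))) ∘ Ds)
          = fun n => (∫⁻ ω, ENNReal.ofReal (Z ω)
              * (‖Hmap U μ Z (Ds n) ω i - Hmap U μ Z D₀ ω i‖₊ : ℝ≥0∞) ^ p ∂P)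
            ^ (1 / p) := by
        funext n
        simp only [Function.comp_apply]
        rw [eLpNorm_eq_lintegral_rpow_enorm_toReal hq0 hqt, hqr]
        simp only [enorm_eq_nnnorm]
        rw [
          lintegral_withDensity_eq_lintegral_mul P hZmeas' (hFmeas Ds n)]
        rfl
      rw [heq]
      exact hrpow0 _ hlim
  · -- finiteness and positivity of h(D)
    intro D i
    have hZmeas' : Measurable fun ω => ENNReal.ofReal (Z ω) := hZmeas.ennreal_ofReal
    have hHm : Measurable fun ω => ENNReal.ofReal (Hmap U μ Z D ω i) :=
      (hHmeas D i).ennreal_ofReal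
    constructor
    · refine (lintegral_pos_iff_support hHm).2 ?_
      have hs1 : Function.support (fun ω => ENNReal.ofReal (Hmap U μ Z D ω i)) = Set.univ :=
        Set.eq_univ_of_forall (fun ω => (ENNReal.ofReal_pos.2 (hHpos D i ω)).ne')
      rw [hs1]
      rw [MeasureTheory.withDensity_apply _ MeasurableSet.univ, Measure.restrict_univ]
      refine (lintegral_pos_iff_support hZmeas').2 ?_
      have hs2 : Function.support (fun ω => ENNReal.ofReal (Z ω)) = Set.univ :=
        Set.eq_univ_of_forall (fun ω => (ENNReal.ofReal_pos.2 (hZpos ω)).ne')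
      rw [hs2]
      simp
    · rw [lintegral_withDensity_eq_lintegral_mul P hZmeas' hHm]
      set Bd : Ω → ℝ := fun ω =>
        Real.exp (C0 + K * ∑ j, |D j|) * (Z ω ^ A + Z ω ^ (-A)) with hBddef
      have hHBd : ∀ ω, Hmap U μ Z D ω i ≤ Bd ω := by
        intro ω
        calc Hmap U μ Z D ω i
            ≤ Real.exp (C0 + K * ∑ j, |D j|) * Real.exp (A * |Real.log (Z ω)|) := hHle D i ω
          _ ≤ Bd ω := mul_le_mul_of_nonneg_left (hexpA ω) (Real.exp_pos _).le
      have hZBint : Integrable (fun ω => Z ω * Bd ω) P := by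
        have heq : (fun ω => Z ω * Bd ω)
            = fun ω => Real.exp (C0 + K * ∑ j, |D j|) * (Z ω ^ (1 + A) + Z ω ^ (1 + -A)) := by
          funext ω
          rw [hBddef]
          simp only
          rw [Real.rpow_add (hZpos ω), Real.rpow_add (hZpos ω), Real.rpow_one]
          ring
        rw [heq]
        exact ((hZmom (1 + A)).add (hZmom (1 + -A))).const_mul _
      calc ∫⁻ ω, ((fun ω => ENNReal.ofReal (Z ω))
            * fun ω => ENNReal.ofReal (Hmap U μ Z D ω i)) ω ∂P
          ≤ ∫⁻ ω, ENNReal.ofReal (Z ω * Bd ω) ∂P := by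
            apply lintegral_mono
            intro ω
            simp only [Pi.mul_apply]
            rw [ENNReal.ofReal_mul (hZpos ω).le]
            exact mul_le_mul_right (ENNReal.ofReal_le_ofReal (hHBd ω)) _
        _ < ⊤ := (hasFiniteIntegral_iff_ofReal (Eventually.of_forall
            (fun ω => mul_nonneg (hZpos ω).le (le_trans (hHpos D i ω).le (hHBd ω))))).1
            hZBint.hasFiniteIntegral
end
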